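/- arXiv:1805.08341 — 5 statements merged into one kernel-verified Lean document; each statement's English description precedes it below -/
import Mathlib

section
/- Let C = [[4,2],[2,3]]. Then every 5×2 integer matrix D with nonnegative entries, each row nonzero, satisfying D^T D = C, has rows that are a permutation of (1,0),(1,0),(1,1),(1,1),(0,1). -/
open Matrix
set_option maxRecDepth 40000
set_option maxHeartbeats 4000000
set_option synthInstance.maxSize 2000
set_option synthInstance.maxHeartbeats 2000000

lemma key_A221 : ∀ p0 p1 p2 p3 p4 : Fin 3 × Fin 2,
    (p0.1.val * p0.1.val + p1.1.val * p1.1.val + p2.1.val * p2.1.val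
      + p3.1.val * p3.1.val + p4.1.val * p4.1.val = 4) →
    (p0.1.val * p0.2.val + p1.1.val * p1.2.val + p2.1.val * p2.2.val
      + p3.1.val * p3.2.val + p4.1.val * p4.2.val = 2) →
    (p0.2.val * p0.2.val + p1.2.val * p1.2.val + p2.2.val * p2.2.val
      + p3.2.val * p3.2.val + p4.2.val * p4.2.val = 3) →
    p0 ≠ (0,0) → p1 ≠ (0,0) → p2 ≠ (0,0) → p3 ≠ (0,0) → p4 ≠ (0,0) →
    ∃ a b c d e : Fin 5,
      a ≠ b ∧ a ≠ c ∧ a ≠ d ∧ a ≠ e ∧ b ≠ c ∧ b ≠ d ∧ b ≠ e ∧ c ≠ d ∧ c ≠ e ∧ d ≠ e ∧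
      ![p0,p1,p2,p3,p4] a = (1,0) ∧ ![p0,p1,p2,p3,p4] b = (1,0) ∧
      ![p0,p1,p2,p3,p4] c = (1,1) ∧ ![p0,p1,p2,p3,p4] d = (1,1) ∧
      ![p0,p1,p2,p3,p4] e = (0,1) := by
  decide

/-- The decomposition matrix of `A(2,2,1)`: every `5 × 2` matrix `D` with
natural-number entries, each row nonzero, satisfying `Dᵀ * D = C` for the Cartan matrix
`C = !![3,1;1,3]`, has rows that are a permutation of `(1,0),(1,0),(1,1),(1,1),(0,1)`. -/
theorem decomposition_matrix_A221
    (D : Matrix (Fin 5) (Fin 2) ℕ)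
    (hrow : ∀ i, (fun j => D i j) ≠ 0)
    (hC : Dᵀ * D = !![4, 2; 2, 3]) :
    ∃ σ : Equiv.Perm (Fin 5),
      ∀ i, (fun j => D (σ i) j) =
        ![![1, 0], ![1, 0], ![1, 1], ![1, 1], ![0, 1]] i := by
  -- extract the three scalar equations
  have e : ∀ j k, ∑ i, D i j * D i k = (!![4, 2; 2, 3] : Matrix (Fin 2) (Fin 2) ℕ) j k := by
    intro j k
    have := congrFun (congrFun hC j) k
    simpa [Matrix.mul_apply, Matrix.transpose_apply] using this
  have e00 := e 0 0
  have e01 := e 0 1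
  have e11 := e 1 1
  simp [Fin.sum_univ_five] at e00 e01 e11
  -- entry bounds
  have hb1 : ∀ i, D i 0 < 3 := by
    intro i
    have hle : D i 0 * D i 0 ≤ 4 := by
      calc D i 0 * D i 0 ≤ ∑ k, D k 0 * D k 0 :=
            Finset.single_le_sum (f := fun k => D k _ * D k _) (fun _ _ => Nat.zero_le _) (Finset.mem_univ i)
        _ = 4 := by simpa using e 0 0
    by_contra h
    push_neg at h
    have h9 : 9 ≤ D i 0 * D i 0 := Nat.mul_le_mul h h
    omega
  have hb2 : ∀ i, D i 1 < 2 := by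
    intro i
    have hle : D i 1 * D i 1 ≤ 3 := by
      calc D i 1 * D i 1 ≤ ∑ k, D k 1 * D k 1 :=
            Finset.single_le_sum (f := fun k => D k _ * D k _) (fun _ _ => Nat.zero_le _) (Finset.mem_univ i)
        _ = 3 := by simpa using e 1 1
    by_contra h
    push_neg at h
    have h4 : 4 ≤ D i 1 * D i 1 := Nat.mul_le_mul h h
    omega
  set f : Fin 5 → Fin 3 × Fin 2 := fun i => (⟨D i 0, hb1 i⟩, ⟨D i 1, hb2 i⟩) with hf
  have hnz : ∀ i, f i ≠ (0, 0) := by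
    intro i h
    apply hrow i
    have h1 : D i 0 = 0 := congrArg (Fin.val ∘ Prod.fst) h
    have h2 : D i 1 = 0 := congrArg (Fin.val ∘ Prod.snd) h
    funext j
    fin_cases j <;> simpa
  obtain ⟨a, b, c, d, e', hab, hac, had, hae, hbc, hbd, hbe, hcd, hce, hde,
      ha, hb, hc, hd, he⟩ :=
    key_A221 (f 0) (f 1) (f 2) (f 3) (f 4) e00 e01 e11
      (hnz 0) (hnz 1) (hnz 2) (hnz 3) (hnz 4)
  have hvec : ∀ x : Fin 5, ![f 0, f 1, f 2, f 3, f 4] x = f x := by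
    intro x; fin_cases x <;> rfl
  rw [hvec] at ha hb hc hd he
  have hinj : Function.Injective (![a, b, c, d, e'] : Fin 5 → Fin 5) := by
    intro x y hxy
    fin_cases x <;> fin_cases y <;> simp_all
  have hbij : Function.Bijective (![a, b, c, d, e'] : Fin 5 → Fin 5) :=
    (Finite.injective_iff_bijective).mp hinj
  refine ⟨Equiv.ofBijective _ hbij, ?_⟩
  intro i
  have key : ∀ x : Fin 5, ∀ u : Fin 3, ∀ v : Fin 2,
      f x = (u, v) → D x 0 = u.val ∧ D x 1 = v.val := by
    intro x u v h
    exact ⟨congrArg (Fin.val ∘ Prod.fst) h, congrArg (Fin.val ∘ Prod.snd) h⟩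
  have rowEq : ∀ x : Fin 5, ∀ u v : ℕ, D x 0 = u → D x 1 = v →
      (fun j => D x j) = ![u, v] := by
    intro x u v h1 h2
    funext j
    fin_cases j <;> simpa
  fin_cases i
  · exact rowEq _ _ _ (key _ _ _ ha).1 (key _ _ _ ha).2
  · exact rowEq _ _ _ (key _ _ _ hb).1 (key _ _ _ hb).2
  · exact rowEq _ _ _ (key _ _ _ hc).1 (key _ _ _ hc).2
  · exact rowEq _ _ _ (key _ _ _ hd).1 (key _ _ _ hd).2
  · exact rowEq _ _ _ (key _ _ _ he).1 (key _ _ _ he).2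
end

section
/- Let C = [[4,2],[2,4]]. Then every 6×2 integer matrix D with nonnegative entries, each row nonzero, satisfying D^T D = C, has rows that are a permutation of (1,0),(1,0),(1,1),(1,1),(0,1),(0,1). -/
open Matrix

set_option maxRecDepth 10000 in
set_option maxHeartbeats 2000000 in
private lemma aux222 : ∀ f g : Fin 6 → Fin 2,
    (∀ i, 1 ≤ (f i).val + (g i).val) →
    (∑ i, (f i).val * (f i).val = 4) →
    (∑ i, (g i).val * (g i).val = 4) →
    (∑ i, (f i).val * (g i).val = 2) →
    ∃ σ : Equiv.Perm (Fin 6), ∀ i,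
      ((f (σ i)).val, (g (σ i)).val) =
        ![(1,0),(1,0),(1,1),(1,1),(0,1),(0,1)] i := by decide

private lemma bound222 (a b : Fin 6 → ℕ)
    (hr : ∀ i, 1 ≤ a i + b i)
    (h1 : ∑ i, a i * a i = 4) (h2 : ∑ i, b i * b i = 4)
    (i : Fin 6) : a i ≤ 1 := by
  by_contra h
  push_neg at h
  have h2i : 2 ≤ a i := h
  have key : 4 ≤ a i * a i := by nlinarith
  have hsplit := (Finset.add_sum_erase Finset.univ (fun j => a j * a j)
    (Finset.mem_univ i)).symm
  have hrest : ∑ j ∈ Finset.univ.erase i, a j * a j = 0 := by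
    have h4 : a i * a i + ∑ j ∈ Finset.univ.erase i, a j * a j = 4 := by
      rw [← hsplit]; exact h1
    omega
  have hzero : ∀ j ∈ Finset.univ.erase i, a j = 0 := by
    intro j hj
    have := (Finset.sum_eq_zero_iff.mp hrest) j hj
    rcases Nat.mul_eq_zero.mp this with h' | h' <;> exact h'
  have hone : ∀ j ∈ Finset.univ.erase i, 1 ≤ b j * b j := by
    intro j hj
    have hb : 1 ≤ b j := by have := hr j; have := hzero j hj; omega
    nlinarith
  have hcard : (Finset.univ.erase i).card = 5 := by
    rw [Finset.card_erase_of_mem (Finset.mem_univ i)]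
    simp
  have h5 : 5 ≤ ∑ j ∈ Finset.univ.erase i, b j * b j := by
    calc 5 = (Finset.univ.erase i).card * 1 := by rw [hcard]
    _ ≤ ∑ j ∈ Finset.univ.erase i, b j * b j := Finset.card_nsmul_le_sum _ _ _ hone
  have hle : ∑ j ∈ Finset.univ.erase i, b j * b j ≤ 4 := by
    rw [← h2]
    exact Finset.sum_le_sum_of_subset (Finset.erase_subset _ _)
  omega

/-- The decomposition matrix of `A(2,2,2)`: every `6 × 2` matrix `D` with
natural-number entries, each row nonzero, satisfying `Dᵀ * D = C` for the Cartan matrix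
`C = !![4,2;2,4]`, has rows that are a permutation of `(1,0),(1,0),(1,1),(1,1),(0,1),(0,1)`. -/
theorem decomposition_matrix_A222
    (D : Matrix (Fin 6) (Fin 2) ℕ)
    (hrow : ∀ i, (fun j => D i j) ≠ 0)
    (hC : Dᵀ * D = !![4, 2; 2, 4]) :
    ∃ σ : Equiv.Perm (Fin 6),
      ∀ i, (fun j => D (σ i) j) =
        ![![1, 0], ![1, 0], ![1, 1], ![1, 1], ![0, 1], ![0, 1]] i := by
  have h00 : ∑ i, D i 0 * D i 0 = 4 := by
    have := congrFun (congrFun hC 0) 0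
    simpa [Matrix.mul_apply, Matrix.transpose_apply] using this
  have h11 : ∑ i, D i 1 * D i 1 = 4 := by
    have := congrFun (congrFun hC 1) 1
    simpa [Matrix.mul_apply, Matrix.transpose_apply] using this
  have h01 : ∑ i, D i 0 * D i 1 = 2 := by
    have := congrFun (congrFun hC 0) 1
    simpa [Matrix.mul_apply, Matrix.transpose_apply] using this
  have hr : ∀ i, 1 ≤ D i 0 + D i 1 := by
    intro i
    by_contra h
    push_neg at h
    apply hrow i
    funext j
    fin_cases j <;> simp <;> omega
  have ha : ∀ i, D i 0 ≤ 1 := bound222 (fun i => D i 0) (fun i => D i 1) hr h00 h11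
  have hb : ∀ i, D i 1 ≤ 1 :=
    bound222 (fun i => D i 1) (fun i => D i 0) (fun i => by show 1 ≤ D i 1 + D i 0; have := hr i; omega) h11 h00
  set f : Fin 6 → Fin 2 := fun i => ⟨D i 0, by have := ha i; omega⟩ with hf
  set g : Fin 6 → Fin 2 := fun i => ⟨D i 1, by have := hb i; omega⟩ with hg
  obtain ⟨σ, hσ⟩ := aux222 f g (fun i => hr i) h00 h11 h01
  refine ⟨σ, fun i => ?_⟩
  have h := hσ i
  have h0 : D (σ i) 0 = (![(1,0),(1,0),(1,1),(1,1),(0,1),(0,1)] i).1 := by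
    rw [← h]
  have h1 : D (σ i) 1 = (![(1,0),(1,0),(1,1),(1,1),(0,1),(0,1)] i).2 := by
    rw [← h]
  funext j
  fin_cases i <;> fin_cases j <;> simp_all [Prod.ext_iff, Matrix.vecHead, Matrix.vecTail] <;> (try decide)
end

section
/- In the algebra A = A(2,2,2) with presentation as above, the endomorphism ring of the projective P₁ is 4-dimensional with basis {e₁, μν, α, α²}, and Hom_A(P₁,P₂) is 2-dimensional with basis given by left multiplication by ν and by νμν. -/
noncomputable section

open FreeAlgebra

/-- Generators of the Brauer graph algebra `A(2,2,2)`: the vertex idempotents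
`e₁, e₂` (indices 0, 1), the loops `α, β` (indices 2, 3) at the vertices 1, 2, and
the arrows `μ : 1 → 2`, `ν : 2 → 1` (indices 4, 5). -/
abbrev A222Gen := Fin 6

/-- The relations presenting the Brauer graph algebra `A(2,2,2)` as a bounded quiver
algebra: `e₁, e₂` are orthogonal idempotents summing to `1`, the arrows `α, β, μ, ν`
have the indicated sources and targets, and
`αμ = μβ = βν = να = 0`, `α² = (μν)²`, `β² = (νμ)²`. -/
inductive a222Rel (K : Type) [Field K] :
    FreeAlgebra K A222Gen → FreeAlgebra K A222Gen → Prop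
  | sum : a222Rel K (ι K 0 + ι K 1) 1
  | orth12 : a222Rel K (ι K 0 * ι K 1) 0
  | orth21 : a222Rel K (ι K 1 * ι K 0) 0
  | idem1 : a222Rel K (ι K 0 * ι K 0) (ι K 0)
  | idem2 : a222Rel K (ι K 1 * ι K 1) (ι K 1)
  | alpha_src : a222Rel K (ι K 0 * ι K 2) (ι K 2)
  | alpha_tgt : a222Rel K (ι K 2 * ι K 0) (ι K 2)
  | beta_src : a222Rel K (ι K 1 * ι K 3) (ι K 3)
  | beta_tgt : a222Rel K (ι K 3 * ι K 1) (ι K 3)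
  | mu_src : a222Rel K (ι K 0 * ι K 4) (ι K 4)
  | mu_tgt : a222Rel K (ι K 4 * ι K 1) (ι K 4)
  | nu_src : a222Rel K (ι K 1 * ι K 5) (ι K 5)
  | nu_tgt : a222Rel K (ι K 5 * ι K 0) (ι K 5)
  | alpha_mu : a222Rel K (ι K 2 * ι K 4) 0
  | mu_beta : a222Rel K (ι K 4 * ι K 3) 0
  | beta_nu : a222Rel K (ι K 3 * ι K 5) 0
  | nu_alpha : a222Rel K (ι K 5 * ι K 2) 0
  | alpha_sq : a222Rel K (ι K 2 ^ 2) ((ι K 4 * ι K 5) ^ 2)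
  | beta_sq : a222Rel K (ι K 3 ^ 2) ((ι K 5 * ι K 4) ^ 2)

/-- The Brauer graph algebra `A(2,2,2)`. -/
abbrev A222 (K : Type) [Field K] : Type := RingQuot (a222Rel K)

variable (K : Type) [Field K]

/-- The images of the generators in `A(2,2,2)`. -/
def g (i : A222Gen) : A222 K := RingQuot.mkAlgHom K (a222Rel K) (ι K i)

/-- The indecomposable projective right `A(2,2,2)`-module `P₁ = e₁A`, as a submodule of
the right regular module (a module over the opposite algebra). -/
def P1 : Submodule (A222 K)ᵐᵒᵖ (A222 K) := Submodule.span _ {g K 0}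

/-- The indecomposable projective right `A(2,2,2)`-module `P₂ = e₂A`. -/
def P2 : Submodule (A222 K)ᵐᵒᵖ (A222 K) := Submodule.span _ {g K 1}

noncomputable instance (M N : Submodule (A222 K)ᵐᵒᵖ (A222 K)) :
    AddCommGroup (M →ₗ[(A222 K)ᵐᵒᵖ] N) :=
  @LinearMap.addCommGroup (A222 K)ᵐᵒᵖ (A222 K)ᵐᵒᵖ M N _ _ _ _ _ _ _

noncomputable instance (M N : Submodule (A222 K)ᵐᵒᵖ (A222 K)) :
    Module K (M →ₗ[(A222 K)ᵐᵒᵖ] N) :=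
  @LinearMap.module (A222 K)ᵐᵒᵖ (A222 K)ᵐᵒᵖ K M N _ _ _ _ _ _ _ _ _ _

namespace A222Aux

variable {K : Type} [Field K]

private lemma grel {x y : FreeAlgebra K A222Gen} (h : a222Rel K x y) :
    RingQuot.mkAlgHom K (a222Rel K) x = RingQuot.mkAlgHom K (a222Rel K) y :=
  RingQuot.mkAlgHom_rel K h

lemma e_sum : g K 0 + g K 1 = 1 := by
  simpa [g] using grel (a222Rel.sum (K := K))

lemma r12 : g K 0 * g K 1 = 0 := by simpa [g] using grel (a222Rel.orth12 (K := K))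
lemma r21 : g K 1 * g K 0 = 0 := by simpa [g] using grel (a222Rel.orth21 (K := K))
lemma r11 : g K 0 * g K 0 = g K 0 := by simpa [g] using grel (a222Rel.idem1 (K := K))
lemma r22 : g K 1 * g K 1 = g K 1 := by simpa [g] using grel (a222Rel.idem2 (K := K))
lemma rE1A : g K 0 * g K 2 = g K 2 := by simpa [g] using grel (a222Rel.alpha_src (K := K))
lemma rAE1 : g K 2 * g K 0 = g K 2 := by simpa [g] using grel (a222Rel.alpha_tgt (K := K))
lemma rE2B : g K 1 * g K 3 = g K 3 := by simpa [g] using grel (a222Rel.beta_src (K := K))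
lemma rBE2 : g K 3 * g K 1 = g K 3 := by simpa [g] using grel (a222Rel.beta_tgt (K := K))
lemma rE1M : g K 0 * g K 4 = g K 4 := by simpa [g] using grel (a222Rel.mu_src (K := K))
lemma rME2 : g K 4 * g K 1 = g K 4 := by simpa [g] using grel (a222Rel.mu_tgt (K := K))
lemma rE2N : g K 1 * g K 5 = g K 5 := by simpa [g] using grel (a222Rel.nu_src (K := K))
lemma rNE1 : g K 5 * g K 0 = g K 5 := by simpa [g] using grel (a222Rel.nu_tgt (K := K))
lemma rAM : g K 2 * g K 4 = 0 := by simpa [g] using grel (a222Rel.alpha_mu (K := K))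
lemma rMB : g K 4 * g K 3 = 0 := by simpa [g] using grel (a222Rel.mu_beta (K := K))
lemma rBN : g K 3 * g K 5 = 0 := by simpa [g] using grel (a222Rel.beta_nu (K := K))
lemma rNA : g K 5 * g K 2 = 0 := by simpa [g] using grel (a222Rel.nu_alpha (K := K))
lemma rAsq : g K 2 * g K 2 = g K 4 * (g K 5 * (g K 4 * g K 5)) := by
  have := grel (a222Rel.alpha_sq (K := K))
  simpa [g, sq, mul_assoc] using this
lemma rBsq : g K 3 * g K 3 = g K 5 * (g K 4 * (g K 5 * g K 4)) := by
  have := grel (a222Rel.beta_sq (K := K))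
  simpa [g, sq, mul_assoc] using this

-- derived vanishing lemmas
lemma rAE2 : g K 2 * g K 1 = 0 := by rw [← rAE1, mul_assoc, r12, mul_zero]
lemma rE2A : g K 1 * g K 2 = 0 := by rw [← rE1A, ← mul_assoc, r21, zero_mul]
lemma rBE1 : g K 3 * g K 0 = 0 := by rw [← rBE2, mul_assoc, r21, mul_zero]
lemma rE1B : g K 0 * g K 3 = 0 := by rw [← rE2B, ← mul_assoc, r12, zero_mul]
lemma rME1 : g K 4 * g K 0 = 0 := by rw [← rME2, mul_assoc, r21, mul_zero]
lemma rE2M : g K 1 * g K 4 = 0 := by rw [← rE1M, ← mul_assoc, r21, zero_mul]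
lemma rNE2 : g K 5 * g K 1 = 0 := by rw [← rNE1, mul_assoc, r12, mul_zero]
lemma rE1N : g K 0 * g K 5 = 0 := by rw [← rE2N, ← mul_assoc, r12, zero_mul]
lemma rAN : g K 2 * g K 5 = 0 := by rw [← rE2N, ← mul_assoc, rAE2, zero_mul]
lemma rBM : g K 3 * g K 4 = 0 := by rw [← rE1M, ← mul_assoc, rBE1, zero_mul]
lemma rMA : g K 4 * g K 2 = 0 := by rw [← rE1A, ← mul_assoc, rME1, zero_mul]
lemma rNB : g K 5 * g K 3 = 0 := by rw [← rE2B, ← mul_assoc, rNE2, zero_mul]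
lemma rMM : g K 4 * g K 4 = 0 := by
  rw [show g K 4 * g K 4 = g K 4 * (g K 0 * g K 4) from by rw [rE1M], ← mul_assoc, rME1, zero_mul]
lemma rNN : g K 5 * g K 5 = 0 := by
  rw [show g K 5 * g K 5 = g K 5 * (g K 1 * g K 5) from by rw [rE2N], ← mul_assoc, rNE2, zero_mul]
lemma rAB : g K 2 * g K 3 = 0 := by rw [← rE2B, ← mul_assoc, rAE2, zero_mul]
lemma rBA : g K 3 * g K 2 = 0 := by rw [← rE1A, ← mul_assoc, rBE1, zero_mul]

end A222Aux

namespace A222Aux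

variable {K : Type} [Field K]

/-- shorthand for standard basis matrices -/
def E (i j : Fin 6) : Matrix (Fin 6) (Fin 6) K := Matrix.single i j 1

lemma Emul (i j k l : Fin 6) :
    (E i j : Matrix (Fin 6) (Fin 6) K) * E k l = if j = k then E i l else 0 := by
  split_ifs with h
  · subst h; simpa [E] using Matrix.single_mul_single_same (c := (1:K)) i j l 1
  · simpa [E] using Matrix.single_mul_single_of_ne (c := (1:K)) _ _ _ h _

/-- The matrices of the generators acting by left multiplication on `Ae₁`,
with basis `e₁, α, μν, α², ν, νμν`. -/
def Mg : A222Gen → Matrix (Fin 6) (Fin 6) K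
  | 0 => E 0 0 + E 1 1 + E 2 2 + E 3 3
  | 1 => E 4 4 + E 5 5
  | 2 => E 1 0 + E 3 1
  | 3 => 0
  | 4 => E 2 4 + E 3 5
  | 5 => E 4 0 + E 5 2

lemma one_eq_sum : (1 : Matrix (Fin 6) (Fin 6) K) =
    E 0 0 + E 1 1 + E 2 2 + E 3 3 + (E 4 4 + E 5 5) := by
  ext i j
  fin_cases i <;> fin_cases j <;>
    simp [E, Matrix.single, Matrix.one_apply]

lemma rep_rel : ∀ ⦃x y : FreeAlgebra K A222Gen⦄, a222Rel K x y →
    (FreeAlgebra.lift K (Mg (K := K))) x = (FreeAlgebra.lift K (Mg (K := K))) y := by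
  intro x y h
  induction h <;>
    simp only [map_add, map_mul, map_one, map_pow, map_zero, FreeAlgebra.lift_ι_apply] <;>
    simp [Mg, sq, add_mul, mul_add, Emul, ← one_eq_sum] <;>
    abel

/-- The representation of `A(2,2,2)` on `Ae₁`. -/
def rep : A222 K →ₐ[K] Matrix (Fin 6) (Fin 6) K :=
  RingQuot.liftAlgHom K ⟨FreeAlgebra.lift K (Mg (K := K)), rep_rel⟩

lemma rep_g (i : A222Gen) : rep (g K i) = Mg (K := K) i := by
  simp [rep, g, RingQuot.liftAlgHom_mkAlgHom_apply]

end A222Aux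

namespace A222Aux

variable {K : Type} [Field K]

/-- The 12 monomials spanning `A(2,2,2)`. -/
def vB : Fin 12 → A222 K :=
  ![g K 0, g K 2, g K 4, g K 4 * g K 5, g K 4 * (g K 5 * g K 4), g K 2 * g K 2,
    g K 1, g K 3, g K 5, g K 5 * g K 4, g K 5 * (g K 4 * g K 5), g K 3 * g K 3]

def S : Submodule K (A222 K) := Submodule.span K (Set.range (vB (K := K)))

lemma vB_mem (i : Fin 12) : vB (K := K) i ∈ S := Submodule.subset_span ⟨i, rfl⟩

lemma m5_mem : g K 4 * (g K 5 * (g K 4 * g K 5)) ∈ S (K := K) := by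
  rw [← rAsq]; exact vB_mem 5

lemma n5_mem : g K 5 * (g K 4 * (g K 5 * g K 4)) ∈ S (K := K) := by
  rw [← rBsq]; exact vB_mem 11

lemma fv0 (h : 0 < 6) : (⟨0, h⟩ : Fin 6) = 0 := rfl
lemma fv1 (h : 1 < 6) : (⟨1, h⟩ : Fin 6) = 1 := rfl
lemma fv2 (h : 2 < 6) : (⟨2, h⟩ : Fin 6) = 2 := rfl
lemma fv3 (h : 3 < 6) : (⟨3, h⟩ : Fin 6) = 3 := rfl
lemma fv4 (h : 4 < 6) : (⟨4, h⟩ : Fin 6) = 4 := rfl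
lemma fv5 (h : 5 < 6) : (⟨5, h⟩ : Fin 6) = 5 := rfl

lemma rMNMNM : g K 4 * (g K 5 * (g K 4 * (g K 5 * g K 4))) = 0 := by
  have h : g K 4 * (g K 5 * (g K 4 * (g K 5 * g K 4))) = (g K 4 * (g K 5 * (g K 4 * g K 5))) * g K 4 := by
    simp [mul_assoc]
  rw [h, ← rAsq, mul_assoc, rAM, mul_zero]

lemma rNMNMN : g K 5 * (g K 4 * (g K 5 * (g K 4 * g K 5))) = 0 := by
  have h : g K 5 * (g K 4 * (g K 5 * (g K 4 * g K 5))) = (g K 5 * (g K 4 * (g K 5 * g K 4))) * g K 5 := by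
    simp [mul_assoc]
  rw [h, ← rBsq, mul_assoc, rBN, mul_zero]

section rows
set_option maxHeartbeats 1000000

lemma row_mul (j : Fin 12) (i : A222Gen) : vB (K := K) j * g K i ∈ S (K := K) := by
  have h0 : g K 0 ∈ S (K := K) := vB_mem 0
  have h1 : g K 2 ∈ S (K := K) := vB_mem 1
  have h2 : g K 4 ∈ S (K := K) := vB_mem 2
  have h3 : g K 4 * g K 5 ∈ S (K := K) := vB_mem 3
  have h4 : g K 4 * (g K 5 * g K 4) ∈ S (K := K) := vB_mem 4
  have h6 : g K 1 ∈ S (K := K) := vB_mem 6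
  have h7 : g K 3 ∈ S (K := K) := vB_mem 7
  have h8 : g K 5 ∈ S (K := K) := vB_mem 8
  have h9 : g K 5 * g K 4 ∈ S (K := K) := vB_mem 9
  have h10 : g K 5 * (g K 4 * g K 5) ∈ S (K := K) := vB_mem 10
  have hz : (0 : A222 K) ∈ S (K := K) := zero_mem _
  fin_cases j
  on_goal 1 => show g K 0 * g K i ∈ S
  on_goal 2 => show g K 2 * g K i ∈ S
  on_goal 3 => show g K 4 * g K i ∈ S
  on_goal 4 => show g K 4 * g K 5 * g K i ∈ S
  on_goal 5 => show g K 4 * (g K 5 * g K 4) * g K i ∈ S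
  on_goal 6 => show g K 2 * g K 2 * g K i ∈ S
  on_goal 7 => show g K 1 * g K i ∈ S
  on_goal 8 => show g K 3 * g K i ∈ S
  on_goal 9 => show g K 5 * g K i ∈ S
  on_goal 10 => show g K 5 * g K 4 * g K i ∈ S
  on_goal 11 => show g K 5 * (g K 4 * g K 5) * g K i ∈ S
  on_goal 12 => show g K 3 * g K 3 * g K i ∈ S
  all_goals fin_cases i
  all_goals simp only [fv0, fv1, fv2, fv3, fv4, fv5, mul_assoc,
        r11, r12, r21, r22, rE1A, rAE1, rE2B, rBE2, rE1M, rME2, rE2N, rNE1,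
        rAM, rMB, rBN, rNA, rAE2, rE2A, rBE1, rE1B, rME1, rE2M, rNE2, rE1N,
        rAN, rBM, rMA, rNB, rMM, rNN, rAB, rBA, rAsq, rBsq, rMNMNM, rNMNMN, mul_zero, zero_mul]
  all_goals first
    | exact hz | exact m5_mem | exact n5_mem
    | exact h0 | exact h1 | exact h2 | exact h3 | exact h4
    | exact h6 | exact h7 | exact h8 | exact h9 | exact h10

end rows

end A222Aux

namespace A222Aux

variable {K : Type} [Field K]

lemma S_mul_g {s : A222 K} (hs : s ∈ S) (i : A222Gen) : s * g K i ∈ S (K := K) := by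
  have hle : S (K := K) ≤ (S (K := K)).comap (LinearMap.mulRight K (g K i)) := by
    rw [S, Submodule.span_le]
    rintro _ ⟨j, rfl⟩
    exact row_mul j i
  exact hle hs

lemma S_mul_free (y : FreeAlgebra K A222Gen) :
    ∀ s ∈ S (K := K), s * RingQuot.mkAlgHom K (a222Rel K) y ∈ S (K := K) := by
  induction y using FreeAlgebra.induction with
  | grade0 r =>
    intro s hs
    rw [AlgHom.commutes, ← Algebra.commutes, ← Algebra.smul_def]
    exact Submodule.smul_mem _ _ hs
  | grade1 x => exact fun s hs => S_mul_g hs x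
  | mul a b ha hb =>
    intro s hs
    rw [map_mul, ← mul_assoc]
    exact hb _ (ha s hs)
  | add a b ha hb =>
    intro s hs
    rw [map_add, mul_add]
    exact add_mem (ha s hs) (hb s hs)

lemma mem_S (x : A222 K) : x ∈ S (K := K) := by
  have h1 : (1 : A222 K) ∈ S (K := K) := by
    rw [← e_sum]; exact add_mem (vB_mem 0) (vB_mem 6)
  obtain ⟨y, rfl⟩ := RingQuot.mkAlgHom_surjective K (a222Rel K) x
  simpa using S_mul_free y 1 h1

end A222Aux

namespace A222Aux

variable {K : Type} [Field K]

private lemma massoc {a b c : A222 K} (h : a * b = c) (x : A222 K) : a * (b * x) = c * x := by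
  rw [← mul_assoc, h]
private lemma massoc0 {a b : A222 K} (h : a * b = 0) (x : A222 K) : a * (b * x) = 0 := by
  rw [← mul_assoc, h, zero_mul]

lemma r11' (x : A222 K) : g K 0 * (g K 0 * x) = g K 0 * x := massoc r11 x
lemma r12' (x : A222 K) : g K 0 * (g K 1 * x) = 0 := massoc0 r12 x
lemma r21' (x : A222 K) : g K 1 * (g K 0 * x) = 0 := massoc0 r21 x
lemma r22' (x : A222 K) : g K 1 * (g K 1 * x) = g K 1 * x := massoc r22 x
lemma rE1A' (x : A222 K) : g K 0 * (g K 2 * x) = g K 2 * x := massoc rE1A x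
lemma rAE1' (x : A222 K) : g K 2 * (g K 0 * x) = g K 2 * x := massoc rAE1 x
lemma rE2B' (x : A222 K) : g K 1 * (g K 3 * x) = g K 3 * x := massoc rE2B x
lemma rBE2' (x : A222 K) : g K 3 * (g K 1 * x) = g K 3 * x := massoc rBE2 x
lemma rE1M' (x : A222 K) : g K 0 * (g K 4 * x) = g K 4 * x := massoc rE1M x
lemma rME2' (x : A222 K) : g K 4 * (g K 1 * x) = g K 4 * x := massoc rME2 x
lemma rE2N' (x : A222 K) : g K 1 * (g K 5 * x) = g K 5 * x := massoc rE2N x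
lemma rNE1' (x : A222 K) : g K 5 * (g K 0 * x) = g K 5 * x := massoc rNE1 x
lemma rAM' (x : A222 K) : g K 2 * (g K 4 * x) = 0 := massoc0 rAM x
lemma rMB' (x : A222 K) : g K 4 * (g K 3 * x) = 0 := massoc0 rMB x
lemma rBN' (x : A222 K) : g K 3 * (g K 5 * x) = 0 := massoc0 rBN x
lemma rNA' (x : A222 K) : g K 5 * (g K 2 * x) = 0 := massoc0 rNA x
lemma rAE2' (x : A222 K) : g K 2 * (g K 1 * x) = 0 := massoc0 rAE2 x
lemma rE2A' (x : A222 K) : g K 1 * (g K 2 * x) = 0 := massoc0 rE2A x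
lemma rBE1' (x : A222 K) : g K 3 * (g K 0 * x) = 0 := massoc0 rBE1 x
lemma rE1B' (x : A222 K) : g K 0 * (g K 3 * x) = 0 := massoc0 rE1B x
lemma rME1' (x : A222 K) : g K 4 * (g K 0 * x) = 0 := massoc0 rME1 x
lemma rE2M' (x : A222 K) : g K 1 * (g K 4 * x) = 0 := massoc0 rE2M x
lemma rNE2' (x : A222 K) : g K 5 * (g K 1 * x) = 0 := massoc0 rNE2 x
lemma rE1N' (x : A222 K) : g K 0 * (g K 5 * x) = 0 := massoc0 rE1N x
lemma rAN' (x : A222 K) : g K 2 * (g K 5 * x) = 0 := massoc0 rAN x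
lemma rBM' (x : A222 K) : g K 3 * (g K 4 * x) = 0 := massoc0 rBM x
lemma rMA' (x : A222 K) : g K 4 * (g K 2 * x) = 0 := massoc0 rMA x
lemma rNB' (x : A222 K) : g K 5 * (g K 3 * x) = 0 := massoc0 rNB x
lemma rMM' (x : A222 K) : g K 4 * (g K 4 * x) = 0 := massoc0 rMM x
lemma rNN' (x : A222 K) : g K 5 * (g K 5 * x) = 0 := massoc0 rNN x
lemma rAB' (x : A222 K) : g K 2 * (g K 3 * x) = 0 := massoc0 rAB x
lemma rBA' (x : A222 K) : g K 3 * (g K 2 * x) = 0 := massoc0 rBA x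
lemma rAsq' (x : A222 K) :
    g K 2 * (g K 2 * x) = g K 4 * (g K 5 * (g K 4 * (g K 5 * x))) := by
  rw [massoc rAsq x]; simp [mul_assoc]
lemma rBsq' (x : A222 K) :
    g K 3 * (g K 3 * x) = g K 5 * (g K 4 * (g K 5 * (g K 4 * x))) := by
  rw [massoc rBsq x]; simp [mul_assoc]
lemma rMNMNM' (x : A222 K) :
    g K 4 * (g K 5 * (g K 4 * (g K 5 * (g K 4 * x)))) = 0 := by
  have h : g K 4 * (g K 5 * (g K 4 * (g K 5 * (g K 4 * x)))) =
      (g K 4 * (g K 5 * (g K 4 * (g K 5 * g K 4)))) * x := by simp [mul_assoc]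
  rw [h, rMNMNM, zero_mul]
lemma rNMNMN' (x : A222 K) :
    g K 5 * (g K 4 * (g K 5 * (g K 4 * (g K 5 * x)))) = 0 := by
  have h : g K 5 * (g K 4 * (g K 5 * (g K 4 * (g K 5 * x)))) =
      (g K 5 * (g K 4 * (g K 5 * (g K 4 * g K 5)))) * x := by simp [mul_assoc]
  rw [h, rNMNMN, zero_mul]

end A222Aux

namespace A222Aux

variable {K : Type} [Field K]

/-- The spanning family for `e₁ A e₁`. -/
def cfam : Fin 4 → A222 K := ![g K 0, g K 4 * g K 5, g K 2, g K 2 ^ 2]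

/-- The spanning family for `e₂ A e₁`. -/
def dfam : Fin 2 → A222 K := ![g K 5, g K 5 * g K 4 * g K 5]

lemma fw0 (h : 0 < 12) : (⟨0, h⟩ : Fin 12) = 0 := rfl
lemma fw1 (h : 1 < 12) : (⟨1, h⟩ : Fin 12) = 1 := rfl
lemma fw2 (h : 2 < 12) : (⟨2, h⟩ : Fin 12) = 2 := rfl
lemma fw3 (h : 3 < 12) : (⟨3, h⟩ : Fin 12) = 3 := rfl
lemma fw4 (h : 4 < 12) : (⟨4, h⟩ : Fin 12) = 4 := rfl
lemma fw5 (h : 5 < 12) : (⟨5, h⟩ : Fin 12) = 5 := rfl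
lemma fw6 (h : 6 < 12) : (⟨6, h⟩ : Fin 12) = 6 := rfl
lemma fw7 (h : 7 < 12) : (⟨7, h⟩ : Fin 12) = 7 := rfl
lemma fw8 (h : 8 < 12) : (⟨8, h⟩ : Fin 12) = 8 := rfl
lemma fw9 (h : 9 < 12) : (⟨9, h⟩ : Fin 12) = 9 := rfl
lemma fw10 (h : 10 < 12) : (⟨10, h⟩ : Fin 12) = 10 := rfl
lemma fw11 (h : 11 < 12) : (⟨11, h⟩ : Fin 12) = 11 := rfl

lemma vBa0 : vB (K := K) 0 = g K 0 := rfl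
lemma vBa1 : vB (K := K) 1 = g K 2 := rfl
lemma vBa2 : vB (K := K) 2 = g K 4 := rfl
lemma vBa3 : vB (K := K) 3 = g K 4 * g K 5 := rfl
lemma vBa4 : vB (K := K) 4 = g K 4 * (g K 5 * g K 4) := rfl
lemma vBa5 : vB (K := K) 5 = g K 2 * g K 2 := rfl
lemma vBa6 : vB (K := K) 6 = g K 1 := rfl
lemma vBa7 : vB (K := K) 7 = g K 3 := rfl
lemma vBa8 : vB (K := K) 8 = g K 5 := rfl
lemma vBa9 : vB (K := K) 9 = g K 5 * g K 4 := rfl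
lemma vBa10 : vB (K := K) 10 = g K 5 * (g K 4 * g K 5) := rfl
lemma vBa11 : vB (K := K) 11 = g K 3 * g K 3 := rfl

lemma cm0 : g K 0 ∈ Submodule.span K (Set.range (cfam (K := K))) :=
  Submodule.subset_span ⟨0, rfl⟩
lemma cm1 : g K 4 * g K 5 ∈ Submodule.span K (Set.range (cfam (K := K))) :=
  Submodule.subset_span ⟨1, rfl⟩
lemma cm2 : g K 2 ∈ Submodule.span K (Set.range (cfam (K := K))) :=
  Submodule.subset_span ⟨2, rfl⟩
lemma cm3 : g K 2 * g K 2 ∈ Submodule.span K (Set.range (cfam (K := K))) := by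
  have : cfam (K := K) 3 ∈ Submodule.span K (Set.range (cfam (K := K))) :=
    Submodule.subset_span ⟨3, rfl⟩
  simpa [cfam, sq] using this
lemma cm3' : g K 4 * (g K 5 * (g K 4 * g K 5)) ∈ Submodule.span K (Set.range (cfam (K := K))) := by
  rw [← rAsq]; exact cm3
lemma dm0 : g K 5 ∈ Submodule.span K (Set.range (dfam (K := K))) :=
  Submodule.subset_span ⟨0, rfl⟩
lemma dm1 : g K 5 * (g K 4 * g K 5) ∈ Submodule.span K (Set.range (dfam (K := K))) := by
  have : dfam (K := K) 1 ∈ Submodule.span K (Set.range (dfam (K := K))) :=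
    Submodule.subset_span ⟨1, rfl⟩
  simpa [dfam, mul_assoc] using this

lemma corner1 {y : A222 K} (h1 : g K 0 * y = y) (h2 : y * g K 0 = y) :
    y ∈ Submodule.span K (Set.range (cfam (K := K))) := by
  have key : ∀ z ∈ S (K := K), g K 0 * (z * g K 0) ∈ Submodule.span K (Set.range (cfam (K := K))) := by
    intro z hz
    induction hz using Submodule.span_induction with
    | mem x h =>
      obtain ⟨j, rfl⟩ := h
      fin_cases j <;>
        simp only [fw0, fw1, fw2, fw3, fw4, fw5, fw6, fw7, fw8, fw9, fw10, fw11,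
          vBa0, vBa1, vBa2, vBa3, vBa4, vBa5, vBa6, vBa7, vBa8, vBa9, vBa10, vBa11,
          mul_assoc, r11', r12', r21', r22', rE1A', rAE1', rE2B', rBE2', rE1M', rME2', rE2N', rNE1',
          rAM', rMB', rBN', rNA', rAE2', rE2A', rBE1', rE1B', rME1', rE2M', rNE2', rE1N',
          rAN', rBM', rMA', rNB', rMM', rNN', rAB', rBA', rAsq', rBsq', rMNMNM', rNMNMN',
          r11, r12, r21, r22, rE1A, rAE1, rE2B, rBE2, rE1M, rME2, rE2N, rNE1,
          rAM, rMB, rBN, rNA, rAE2, rE2A, rBE1, rE1B, rME1, rE2M, rNE2, rE1N,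
          rAN, rBM, rMA, rNB, rMM, rNN, rAB, rBA, rAsq, rBsq, mul_zero, zero_mul] <;>
        first
          | exact zero_mem _ | exact cm0 | exact cm1 | exact cm2 | exact cm3 | exact cm3'
    | zero => simp
    | add a b _ _ ha hb =>
      rw [add_mul, mul_add]
      exact add_mem ha hb
    | smul t a _ ha =>
      rw [smul_mul_assoc, mul_smul_comm]
      exact Submodule.smul_mem _ _ ha
  have := key y (mem_S y)
  rwa [h2, h1] at this

lemma corner2 {y : A222 K} (h1 : g K 1 * y = y) (h2 : y * g K 0 = y) :
    y ∈ Submodule.span K (Set.range (dfam (K := K))) := by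
  have key : ∀ z ∈ S (K := K), g K 1 * (z * g K 0) ∈ Submodule.span K (Set.range (dfam (K := K))) := by
    intro z hz
    induction hz using Submodule.span_induction with
    | mem x h =>
      obtain ⟨j, rfl⟩ := h
      fin_cases j <;>
        simp only [fw0, fw1, fw2, fw3, fw4, fw5, fw6, fw7, fw8, fw9, fw10, fw11,
          vBa0, vBa1, vBa2, vBa3, vBa4, vBa5, vBa6, vBa7, vBa8, vBa9, vBa10, vBa11,
          mul_assoc, r11', r12', r21', r22', rE1A', rAE1', rE2B', rBE2', rE1M', rME2', rE2N', rNE1',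
          rAM', rMB', rBN', rNA', rAE2', rE2A', rBE1', rE1B', rME1', rE2M', rNE2', rE1N',
          rAN', rBM', rMA', rNB', rMM', rNN', rAB', rBA', rAsq', rBsq', rMNMNM', rNMNMN',
          r11, r12, r21, r22, rE1A, rAE1, rE2B, rBE2, rE1M, rME2, rE2N, rNE1,
          rAM, rMB, rBN, rNA, rAE2, rE2A, rBE1, rE1B, rME1, rE2M, rNE2, rE1N,
          rAN, rBM, rMA, rNB, rMM, rNN, rAB, rBA, rAsq, rBsq, mul_zero, zero_mul] <;>
        first
          | exact zero_mem _ | exact dm0 | exact dm1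
    | zero => simp
    | add a b _ _ ha hb =>
      rw [add_mul, mul_add]
      exact add_mem ha hb
    | smul t a _ ha =>
      rw [smul_mul_assoc, mul_smul_comm]
      exact Submodule.smul_mem _ _ ha
  have := key y (mem_S y)
  rwa [h2, h1] at this

end A222Aux

namespace A222Aux

variable {K : Type} [Field K]

lemma e1_mem : g K 0 ∈ P1 K := Submodule.mem_span_singleton_self _

lemma mem_P1_of (b : A222 K) : g K 0 * b ∈ P1 K := by
  rw [P1, Submodule.mem_span_singleton]
  exact ⟨MulOpposite.op b, rfl⟩

lemma mem_P2_of (b : A222 K) : g K 1 * b ∈ P2 K := by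
  rw [P2, Submodule.mem_span_singleton]
  exact ⟨MulOpposite.op b, rfl⟩

lemma exists_of_mem_P1 {x : A222 K} (hx : x ∈ P1 K) : ∃ a, x = g K 0 * a := by
  rw [P1, Submodule.mem_span_singleton] at hx
  obtain ⟨r, hr⟩ := hx
  exact ⟨r.unop, by rw [← hr]; rfl⟩

def lmulHom (Q : Submodule (A222 K)ᵐᵒᵖ (A222 K)) (c : A222 K)
    (hc : ∀ x ∈ P1 K, c * x ∈ Q) : P1 K →ₗ[(A222 K)ᵐᵒᵖ] Q where
  toFun x := ⟨c * x.1, hc x.1 x.2⟩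
  map_add' x y := Subtype.ext (by simp [mul_add])
  map_smul' r x := Subtype.ext (by
    simp only [Submodule.coe_smul, MulOpposite.smul_eq_mul_unop, RingHom.id_apply,
      SetLike.mk_smul_mk]
    rw [← mul_assoc])

@[simp] lemma lmulHom_apply (Q : Submodule (A222 K)ᵐᵒᵖ (A222 K)) (c : A222 K)
    (hc : ∀ x ∈ P1 K, c * x ∈ Q) (x : P1 K) :
    ((lmulHom Q c hc x : Q) : A222 K) = c * x.1 := rfl

lemma hg0c (i : Fin 4) : g K 0 * cfam (K := K) i = cfam (K := K) i := by
  fin_cases i <;> simp [cfam, sq, r11, rE1A, rE1M, rE1A', rE1M', mul_assoc]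

lemma hcg0 (i : Fin 4) : cfam (K := K) i * g K 0 = cfam (K := K) i := by
  fin_cases i <;> simp [cfam, sq, r11, rAE1, rNE1, mul_assoc]

lemma hg1d (i : Fin 2) : g K 1 * dfam (K := K) i = dfam (K := K) i := by
  fin_cases i <;> simp [dfam, rE2N, rE2N', mul_assoc]

lemma hdg0 (i : Fin 2) : dfam (K := K) i * g K 0 = dfam (K := K) i := by
  fin_cases i <;> simp [dfam, rNE1, mul_assoc]

lemma cfam_stable (i : Fin 4) : ∀ x ∈ P1 K, cfam (K := K) i * x ∈ P1 K := by
  intro x hx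
  obtain ⟨a, rfl⟩ := exists_of_mem_P1 hx
  have h : cfam (K := K) i * (g K 0 * a) = g K 0 * (cfam (K := K) i * (g K 0 * a)) := by
    conv_lhs => rw [← hg0c i]
    rw [mul_assoc]
  rw [h]; exact mem_P1_of _

lemma dfam_stable (i : Fin 2) : ∀ x ∈ P1 K, dfam (K := K) i * x ∈ P2 K := by
  intro x hx
  obtain ⟨a, rfl⟩ := exists_of_mem_P1 hx
  have h : dfam (K := K) i * (g K 0 * a) = g K 1 * (dfam (K := K) i * (g K 0 * a)) := by
    conv_lhs => rw [← hg1d i]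
    rw [mul_assoc]
  rw [h]; exact mem_P2_of _

/-- The four basis endomorphisms of `P₁`. -/
def bE (i : Fin 4) : P1 K →ₗ[(A222 K)ᵐᵒᵖ] P1 K := lmulHom (P1 K) (cfam i) (cfam_stable i)

/-- The two basis homomorphisms `P₁ → P₂`. -/
def bH (i : Fin 2) : P1 K →ₗ[(A222 K)ᵐᵒᵖ] P2 K := lmulHom (P2 K) (dfam i) (dfam_stable i)

end A222Aux

namespace A222Aux

variable {K : Type} [Field K]

lemma Eapply (i j r c : Fin 6) :
    (E i j : Matrix (Fin 6) (Fin 6) K) r c = if i = r ∧ j = c then 1 else 0 := by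
  simp [E, Matrix.single, Matrix.of_apply]

lemma repc0 : rep (cfam (K := K) 0) = E 0 0 + E 1 1 + E 2 2 + E 3 3 := by
  rw [show cfam (K := K) 0 = g K 0 from rfl, rep_g]; rfl

lemma repc1 : rep (cfam (K := K) 1) = E 2 0 + E 3 2 := by
  rw [show cfam (K := K) 1 = g K 4 * g K 5 from rfl, map_mul, rep_g, rep_g]
  simp [Mg, add_mul, mul_add, Emul]

lemma repc2 : rep (cfam (K := K) 2) = E 1 0 + E 3 1 := by
  rw [show cfam (K := K) 2 = g K 2 from rfl, rep_g]; rfl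

lemma repc3 : rep (cfam (K := K) 3) = E 3 0 := by
  rw [show cfam (K := K) 3 = g K 2 ^ 2 from rfl, map_pow, rep_g]
  simp [sq, Mg, add_mul, mul_add, Emul]

lemma repd0 : rep (dfam (K := K) 0) = E 4 0 + E 5 2 := by
  rw [show dfam (K := K) 0 = g K 5 from rfl, rep_g]; rfl

lemma repd1 : rep (dfam (K := K) 1) = E 5 0 := by
  rw [show dfam (K := K) 1 = g K 5 * g K 4 * g K 5 from rfl, map_mul, map_mul]
  simp only [rep_g]
  simp [Mg, add_mul, mul_add, Emul]

lemma cfam_indep {lam : Fin 4 → K} (h : ∑ i, lam i • cfam (K := K) i = 0) :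
    ∀ i, lam i = 0 := by
  have hr : ∑ i, lam i • rep (cfam (K := K) i) = 0 := by
    have := congrArg (rep (K := K)) h
    simpa [map_sum] using this
  rw [Fin.sum_univ_four, repc0, repc1, repc2, repc3] at hr
  intro i
  fin_cases i
  · have := congrFun (congrFun hr 0) 0
    simpa [Matrix.add_apply, Matrix.smul_apply, Eapply] using this
  · have := congrFun (congrFun hr 2) 0
    simpa [Matrix.add_apply, Matrix.smul_apply, Eapply] using this
  · have := congrFun (congrFun hr 1) 0
    simpa [Matrix.add_apply, Matrix.smul_apply, Eapply] using this
  · have := congrFun (congrFun hr 3) 0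
    simpa [Matrix.add_apply, Matrix.smul_apply, Eapply] using this

lemma dfam_indep {lam : Fin 2 → K} (h : ∑ i, lam i • dfam (K := K) i = 0) :
    ∀ i, lam i = 0 := by
  have hr : ∑ i, lam i • rep (dfam (K := K) i) = 0 := by
    have := congrArg (rep (K := K)) h
    simpa [map_sum] using this
  rw [Fin.sum_univ_two, repd0, repd1] at hr
  intro i
  fin_cases i
  · have := congrFun (congrFun hr 4) 0
    simpa [Matrix.add_apply, Matrix.smul_apply, Eapply] using this
  · have := congrFun (congrFun hr 5) 0
    simpa [Matrix.add_apply, Matrix.smul_apply, Eapply] using this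

end A222Aux

namespace A222Aux

variable {K : Type} [Field K]

lemma exists_of_mem_P2 {x : A222 K} (hx : x ∈ P2 K) : ∃ a, x = g K 1 * a := by
  rw [P2, Submodule.mem_span_singleton] at hx
  obtain ⟨r, hr⟩ := hx
  exact ⟨r.unop, by rw [← hr]; rfl⟩

lemma P1_pt (x : P1 K) : ∃ a : A222 K,
    x = (MulOpposite.op a : (A222 K)ᵐᵒᵖ) • (⟨g K 0, e1_mem⟩ : P1 K) := by
  obtain ⟨a, ha⟩ := exists_of_mem_P1 x.2
  exact ⟨a, Subtype.ext ha⟩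

lemma smul_pt {φ : P1 K →ₗ[(A222 K)ᵐᵒᵖ] P1 K} :
    True := trivial

lemma bE_indep : LinearIndependent K (bE (K := K)) := by
  rw [Fintype.linearIndependent_iff]
  intro lam h
  have h0 := congrArg (fun ψ : P1 K →ₗ[(A222 K)ᵐᵒᵖ] P1 K =>
    ((ψ (⟨g K 0, e1_mem⟩ : P1 K) : P1 K) : A222 K)) h
  simp only [LinearMap.sum_apply, LinearMap.smul_apply, LinearMap.zero_apply,
    ZeroMemClass.coe_zero, AddSubmonoidClass.coe_finset_sum, SetLike.val_smul] at h0
  have h1 : ∑ i, lam i • cfam (K := K) i = 0 := by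
    rw [← h0]
    refine Finset.sum_congr rfl fun i _ => ?_
    congr 1
    show cfam (K := K) i = cfam (K := K) i * g K 0
    rw [hcg0]
  exact cfam_indep h1

lemma bE_span : ⊤ ≤ Submodule.span K (Set.range (bE (K := K))) := by
  intro φ _
  set y := φ (⟨g K 0, e1_mem⟩ : P1 K) with hydef
  have hy1 : g K 0 * (y : A222 K) = y := by
    obtain ⟨a, ha⟩ := exists_of_mem_P1 y.2
    rw [ha, r11']
  have hpt : (MulOpposite.op (g K 0) : (A222 K)ᵐᵒᵖ) • (⟨g K 0, e1_mem⟩ : P1 K)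
      = ⟨g K 0, e1_mem⟩ :=
    Subtype.ext (show g K 0 * g K 0 = g K 0 from r11)
  have hy2 : (y : A222 K) * g K 0 = y := by
    have hs := φ.map_smul (MulOpposite.op (g K 0) : (A222 K)ᵐᵒᵖ) ⟨g K 0, e1_mem⟩
    rw [hpt, ← hydef] at hs
    have h2 := congrArg Subtype.val hs
    exact h2.symm
  obtain ⟨lam, hlam⟩ := (Submodule.mem_span_range_iff_exists_fun K).1 (corner1 hy1 hy2)
  have hφ : φ = ∑ i, lam i • bE (K := K) i := by
    apply LinearMap.ext
    intro x
    obtain ⟨a, rfl⟩ := P1_pt x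
    rw [map_smul, map_smul, ← hydef]
    congr 1
    apply Subtype.ext
    have : (((∑ i, lam i • bE (K := K) i) (⟨g K 0, e1_mem⟩ : P1 K) : P1 K) : A222 K)
        = ∑ i, lam i • (cfam (K := K) i * g K 0) := by
      simp [bE, LinearMap.sum_apply]
    rw [show ((y : P1 K) : A222 K) = ∑ i, lam i • cfam (K := K) i from hlam.symm, this]
    refine Finset.sum_congr rfl fun i _ => ?_
    rw [hcg0]
  rw [hφ]
  exact Submodule.sum_mem _ fun i _ =>
    Submodule.smul_mem _ _ (Submodule.subset_span ⟨i, rfl⟩)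

lemma bH_indep : LinearIndependent K (bH (K := K)) := by
  rw [Fintype.linearIndependent_iff]
  intro lam h
  have h0 := congrArg (fun ψ : P1 K →ₗ[(A222 K)ᵐᵒᵖ] P2 K =>
    ((ψ (⟨g K 0, e1_mem⟩ : P1 K) : P2 K) : A222 K)) h
  simp only [LinearMap.sum_apply, LinearMap.smul_apply, LinearMap.zero_apply,
    ZeroMemClass.coe_zero, AddSubmonoidClass.coe_finset_sum, SetLike.val_smul] at h0
  have h1 : ∑ i, lam i • dfam (K := K) i = 0 := by
    rw [← h0]
    refine Finset.sum_congr rfl fun i _ => ?_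
    congr 1
    show dfam (K := K) i = dfam (K := K) i * g K 0
    rw [hdg0]
  exact dfam_indep h1

lemma bH_span : ⊤ ≤ Submodule.span K (Set.range (bH (K := K))) := by
  intro φ _
  set y := φ (⟨g K 0, e1_mem⟩ : P1 K) with hydef
  have hy1 : g K 1 * (y : A222 K) = y := by
    obtain ⟨a, ha⟩ := exists_of_mem_P2 y.2
    rw [ha, r22']
  have hpt : (MulOpposite.op (g K 0) : (A222 K)ᵐᵒᵖ) • (⟨g K 0, e1_mem⟩ : P1 K)
      = ⟨g K 0, e1_mem⟩ :=
    Subtype.ext (show g K 0 * g K 0 = g K 0 from r11)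
  have hy2 : (y : A222 K) * g K 0 = y := by
    have hs := φ.map_smul (MulOpposite.op (g K 0) : (A222 K)ᵐᵒᵖ) ⟨g K 0, e1_mem⟩
    rw [hpt, ← hydef] at hs
    have h2 := congrArg Subtype.val hs
    exact h2.symm
  obtain ⟨lam, hlam⟩ := (Submodule.mem_span_range_iff_exists_fun K).1 (corner2 hy1 hy2)
  have hφ : φ = ∑ i, lam i • bH (K := K) i := by
    apply LinearMap.ext
    intro x
    obtain ⟨a, rfl⟩ := P1_pt x
    rw [map_smul, map_smul, ← hydef]
    congr 1
    apply Subtype.ext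
    have : (((∑ i, lam i • bH (K := K) i) (⟨g K 0, e1_mem⟩ : P1 K) : P2 K) : A222 K)
        = ∑ i, lam i • (dfam (K := K) i * g K 0) := by
      simp [bH, LinearMap.sum_apply]
    rw [show ((y : P2 K) : A222 K) = ∑ i, lam i • dfam (K := K) i from hlam.symm, this]
    refine Finset.sum_congr rfl fun i _ => ?_
    rw [hdg0]
  rw [hφ]
  exact Submodule.sum_mem _ fun i _ =>
    Submodule.smul_mem _ _ (Submodule.subset_span ⟨i, rfl⟩)

/-- The basis of `End(P₁)`. -/
def basE : Module.Basis (Fin 4) K (P1 K →ₗ[(A222 K)ᵐᵒᵖ] P1 K) := Module.Basis.mk bE_indep bE_span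

/-- The basis of `Hom(P₁, P₂)`. -/
def basH : Module.Basis (Fin 2) K (P1 K →ₗ[(A222 K)ᵐᵒᵖ] P2 K) := Module.Basis.mk bH_indep bH_span

end A222Aux


/-- In `A = A(2,2,2)`, the endomorphism ring of the projective right module `P₁` is
`4`-dimensional over `K`, with basis given by left multiplication by
`e₁, μν, α, α²`, and `Hom_A(P₁, P₂)` is `2`-dimensional, with basis given by left
multiplication by `ν` and by `νμν`. -/
theorem A222_End_P1_and_Hom_P1_P2 :
    Module.finrank K (P1 K →ₗ[(A222 K)ᵐᵒᵖ] P1 K) = 4 ∧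
    (∃ b : Module.Basis (Fin 4) K (P1 K →ₗ[(A222 K)ᵐᵒᵖ] P1 K),
      ∀ i x, ((b i x : A222 K)) =
        ![g K 0, g K 4 * g K 5, g K 2, g K 2 ^ 2] i * (x : A222 K)) ∧
    Module.finrank K (P1 K →ₗ[(A222 K)ᵐᵒᵖ] P2 K) = 2 ∧
    (∃ b : Module.Basis (Fin 2) K (P1 K →ₗ[(A222 K)ᵐᵒᵖ] P2 K),
      ∀ i x, ((b i x : A222 K)) =
        ![g K 5, g K 5 * g K 4 * g K 5] i * (x : A222 K)) := by
  refine ⟨?_, ⟨A222Aux.basE, ?_⟩, ?_, ⟨A222Aux.basH, ?_⟩⟩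
  · rw [Module.finrank_eq_card_basis (A222Aux.basE (K := K))]; rfl
  · intro i x
    rw [A222Aux.basE, Module.Basis.mk_apply]
    rfl
  · rw [Module.finrank_eq_card_basis (A222Aux.basH (K := K))]; rfl
  · intro i x
    rw [A222Aux.basH, Module.Basis.mk_apply]
    rfl

end
end

section
/- In the Hecke algebra H_n(q,1) of type B with Q = 1, the assignments σ(T₀) = -T₀, σ(T_i) = T_i for i ≥ 1, and τ(T₁) = T₀T₁T₀, τ(T_i) = T_i for i ≠ 1, extend to algebra automorphisms σ and τ of H_n(q,1), and these automorphisms commute: στ = τσ. -/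
noncomputable section

open FreeAlgebra

/-- The defining relations of the Hecke algebra `H_n(q, 1)` of type `B` with parameter
`Q = 1`, on generators `T₀, …, T_{n-1}`:
`T₀² = 1`, `(Tᵢ - q)(Tᵢ + 1) = 0` for `1 ≤ i ≤ n-1`, `(T₀T₁)² = (T₁T₀)²`,
`TᵢTⱼ = TⱼTᵢ` for `j ≥ i + 2`, and `TᵢTᵢ₊₁Tᵢ = Tᵢ₊₁TᵢTᵢ₊₁` for `1 ≤ i ≤ n-2`. -/
inductive heckeBRel (K : Type) [Field K] (n : ℕ) (q : K) :
    FreeAlgebra K (Fin n) → FreeAlgebra K (Fin n) → Prop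
  | quad0 (h : 0 < n) : heckeBRel K n q (ι K ⟨0, h⟩ * ι K ⟨0, h⟩) 1
  | quad (i : Fin n) (h : 1 ≤ i.val) :
      heckeBRel K n q
        ((ι K i - algebraMap K (FreeAlgebra K (Fin n)) q) * (ι K i + 1)) 0
  | braid01 (h : 1 < n) :
      heckeBRel K n q ((ι K ⟨0, by omega⟩ * ι K ⟨1, h⟩) ^ 2)
        ((ι K ⟨1, h⟩ * ι K ⟨0, by omega⟩) ^ 2)
  | comm (i j : Fin n) (h : i.val + 2 ≤ j.val) :
      heckeBRel K n q (ι K i * ι K j) (ι K j * ι K i)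
  | braid (i j : Fin n) (hi : 1 ≤ i.val) (hj : j.val = i.val + 1) :
      heckeBRel K n q (ι K i * ι K j * ι K i) (ι K j * ι K i * ι K j)

/-- The Hecke algebra `H_n(q, 1)` of type `B` with `Q = 1`. -/
abbrev HeckeB (K : Type) [Field K] (n : ℕ) (q : K) : Type := RingQuot (heckeBRel K n q)

variable (K : Type) [Field K] (n : ℕ) (q : K)

/-- The images `T i` of the generators in `H_n(q, 1)`. -/
def T (i : Fin n) : HeckeB K n q := RingQuot.mkAlgHom K (heckeBRel K n q) (ι K i)

variable {K n q}

/-! ### Abstract conjugation lemmas -/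

section Conj

variable {A : Type} [Ring A] [Algebra K A]

lemma conj_invol (a t : A) (h0 : a * a = 1) : a * (a * t * a) * a = t := by
  have h0' : ∀ x : A, a * (a * x) = x := fun x => by rw [← mul_assoc, h0, one_mul]
  simp only [mul_assoc]
  rw [h0, mul_one, h0']

lemma conj_braid01 (a t : A) (h0 : a * a = 1) (e : (a * t) ^ 2 = (t * a) ^ 2) :
    (a * (a * t * a)) ^ 2 = ((a * t * a) * a) ^ 2 := by
  have l : a * (a * t * a) = t * a := by rw [← mul_assoc, ← mul_assoc, h0, one_mul]
  have r : (a * t * a) * a = a * t := by rw [mul_assoc, h0, mul_one]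
  rw [l, r]
  exact e.symm

lemma conj_comm (a t u : A) (c0 : a * u = u * a) (c : t * u = u * t) :
    (a * t * a) * u = u * (a * t * a) := by
  have c0' : ∀ x : A, a * (u * x) = u * (a * x) := fun x => by rw [← mul_assoc, c0, mul_assoc]
  have c' : ∀ x : A, t * (u * x) = u * (t * x) := fun x => by rw [← mul_assoc, c, mul_assoc]
  simp only [mul_assoc]
  rw [c0, c' a, c0' (t * a)]

lemma conj_braid (a t u : A) (h0 : a * a = 1) (c0 : a * u = u * a)
    (b : t * u * t = u * t * u) :
    (a * t * a) * u * (a * t * a) = u * (a * t * a) * u := by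
  have h0' : ∀ x : A, a * (a * x) = x := fun x => by rw [← mul_assoc, h0, one_mul]
  have c0' : ∀ x : A, a * (u * x) = u * (a * x) := fun x => by rw [← mul_assoc, c0, mul_assoc]
  have b' : ∀ x : A, t * (u * (t * x)) = u * (t * (u * x)) := fun x => by
    rw [← mul_assoc, ← mul_assoc, b, mul_assoc, mul_assoc]
  simp only [mul_assoc]
  rw [c0' (a * (t * a)), h0' (t * a), b' a, c0' (t * (u * a)), c0]

lemma conj_quad (q : K) (a t : A) (h0 : a * a = 1)
    (ht : (t - algebraMap K A q) * (t + 1) = 0) :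
    (a * t * a - algebraMap K A q) * (a * t * a + 1) = 0 := by
  have h0' : ∀ x : A, a * (a * x) = x := fun x => by rw [← mul_assoc, h0, one_mul]
  have ht' : t * t = q • t - t + q • (1 : A) := by
    simp only [Algebra.algebraMap_eq_smul_one, sub_mul, mul_add, mul_one, smul_mul_assoc,
      one_mul] at ht
    rw [← sub_eq_zero, ← ht]
    abel
  have key : (a * t * a) * (a * t * a) = q • (a * t * a) - a * t * a + q • (1 : A) := by
    have e1 : (a * t * a) * (a * t * a) = a * ((t * t) * a) := by
      simp only [mul_assoc]
      rw [h0' (t * a)]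
    rw [e1, ht']
    simp only [mul_sub, sub_mul, mul_add, add_mul, mul_smul_comm, smul_mul_assoc, mul_one,
      one_mul, h0, mul_assoc]
  rw [Algebra.algebraMap_eq_smul_one, sub_mul, mul_add, mul_add, mul_one, mul_one,
    smul_mul_assoc, one_mul, key]
  abel

lemma neg_quad0 (a : A) (h : a * a = 1) : -a * -a = 1 := by
  rw [neg_mul_neg]; exact h

lemma neg_braid01 (a t : A) (e : (a * t) ^ 2 = (t * a) ^ 2) :
    (-a * t) ^ 2 = (t * -a) ^ 2 := by
  rw [neg_mul, mul_neg, neg_sq, neg_sq]; exact e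

lemma neg_comm' (a t : A) (c : a * t = t * a) : -a * t = t * -a := by
  rw [neg_mul, mul_neg, c]

lemma neg_conj (a t : A) : -a * t * -a = a * t * a := by
  rw [neg_mul, neg_mul, mul_neg, neg_neg]

end Conj

/-! ### Relations in the quotient -/

lemma rel_q {a b : FreeAlgebra K (Fin n)} (h : heckeBRel K n q a b) :
    RingQuot.mkAlgHom K (heckeBRel K n q) a = RingQuot.mkAlgHom K (heckeBRel K n q) b :=
  RingQuot.mkAlgHom_rel K h

lemma T0_sq (h : 0 < n) : T K n q ⟨0, h⟩ * T K n q ⟨0, h⟩ = 1 := by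
  have := rel_q (heckeBRel.quad0 (K := K) (q := q) h)
  simpa [T] using this

lemma Tquad (i : Fin n) (h : 1 ≤ i.val) :
    (T K n q i - algebraMap K (HeckeB K n q) q) * (T K n q i + 1) = 0 := by
  have := rel_q (heckeBRel.quad (K := K) (q := q) i h)
  simpa [T] using this

lemma Tbraid01 (h : 1 < n) :
    (T K n q ⟨0, by omega⟩ * T K n q ⟨1, h⟩) ^ 2 =
      (T K n q ⟨1, h⟩ * T K n q ⟨0, by omega⟩) ^ 2 := by
  have := rel_q (heckeBRel.braid01 (K := K) (q := q) h)
  simpa [T] using this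

lemma Tcomm (i j : Fin n) (h : i.val + 2 ≤ j.val) :
    T K n q i * T K n q j = T K n q j * T K n q i := by
  have := rel_q (heckeBRel.comm (K := K) (q := q) i j h)
  simpa [T] using this

lemma Tbraid (i j : Fin n) (hi : 1 ≤ i.val) (hj : j.val = i.val + 1) :
    T K n q i * T K n q j * T K n q i = T K n q j * T K n q i * T K n q j := by
  have := rel_q (heckeBRel.braid (K := K) (q := q) i j hi hj)
  simpa [T] using this

lemma heckeB_hom_ext {A : Type} [Semiring A] [Algebra K A]
    {f g : HeckeB K n q →ₐ[K] A}
    (h : ∀ i, f (T K n q i) = g (T K n q i)) : f = g := by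
  have h2 : f.comp (RingQuot.mkAlgHom K (heckeBRel K n q)) =
      g.comp (RingQuot.mkAlgHom K (heckeBRel K n q)) :=
    FreeAlgebra.hom_ext (funext fun i => h i)
  refine AlgHom.ext fun x => ?_
  obtain ⟨y, rfl⟩ := RingQuot.mkAlgHom_surjective K (heckeBRel K n q) x
  exact AlgHom.congr_fun h2 y

/-! ### The homomorphism σ -/

variable (K n q) in
def sigmaF : FreeAlgebra K (Fin n) →ₐ[K] HeckeB K n q :=
  FreeAlgebra.lift K fun i => if i.val = 0 then -(T K n q i) else T K n q i

lemma sigmaF_ι0 {i : Fin n} (h : i.val = 0) : sigmaF K n q (ι K i) = -(T K n q i) := by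
  simp only [sigmaF, FreeAlgebra.lift_ι_apply]
  rw [if_pos h]

lemma sigmaF_ι1 {i : Fin n} (h : ¬ i.val = 0) : sigmaF K n q (ι K i) = T K n q i := by
  simp only [sigmaF, FreeAlgebra.lift_ι_apply]
  rw [if_neg h]

lemma sigmaF_rel ⦃a b : FreeAlgebra K (Fin n)⦄ (h : heckeBRel K n q a b) :
    sigmaF K n q a = sigmaF K n q b := by
  induction h with
  | quad0 h =>
      rw [map_mul, map_one, sigmaF_ι0 (i := ⟨0, h⟩) rfl]
      exact neg_quad0 _ (T0_sq h)
  | quad i hi =>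
      rw [map_mul, map_sub, map_add, map_one, map_zero, AlgHom.commutes,
        sigmaF_ι1 (by omega)]
      exact Tquad i hi
  | braid01 h =>
      rw [map_pow, map_pow, map_mul, map_mul, sigmaF_ι0 (i := ⟨0, by omega⟩) rfl,
        sigmaF_ι1 (i := ⟨1, h⟩) (by simp)]
      exact neg_braid01 _ _ (Tbraid01 h)
  | comm i j h =>
      have hj0 : ¬ j.val = 0 := by omega
      by_cases hi0 : i.val = 0
      · rw [map_mul, map_mul, sigmaF_ι0 hi0, sigmaF_ι1 hj0]
        exact neg_comm' _ _ (Tcomm i j h)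
      · rw [map_mul, map_mul, sigmaF_ι1 hi0, sigmaF_ι1 hj0]
        exact Tcomm i j h
  | braid i j hi hj =>
      rw [map_mul, map_mul, map_mul, map_mul, sigmaF_ι1 (i := i) (by omega),
        sigmaF_ι1 (i := j) (by omega)]
      exact Tbraid i j hi hj

variable (K n q) in
def sigmaH : HeckeB K n q →ₐ[K] HeckeB K n q :=
  RingQuot.liftAlgHom K ⟨sigmaF K n q, sigmaF_rel⟩

lemma sigmaH_T0 {i : Fin n} (h : i.val = 0) : sigmaH K n q (T K n q i) = -(T K n q i) := by
  rw [sigmaH, T, RingQuot.liftAlgHom_mkAlgHom_apply, sigmaF_ι0 h]; rfl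

lemma sigmaH_T1 {i : Fin n} (h : ¬ i.val = 0) : sigmaH K n q (T K n q i) = T K n q i := by
  rw [sigmaH, T, RingQuot.liftAlgHom_mkAlgHom_apply, sigmaF_ι1 h]; rfl

/-! ### The homomorphism τ -/

variable (K n q) in
def tauF : FreeAlgebra K (Fin n) →ₐ[K] HeckeB K n q :=
  FreeAlgebra.lift K fun i =>
    if i.val = 1 then T K n q ⟨0, i.pos⟩ * T K n q i * T K n q ⟨0, i.pos⟩ else T K n q i

lemma tauF_ι1 {i : Fin n} (h : i.val = 1) :
    tauF K n q (ι K i) = T K n q ⟨0, i.pos⟩ * T K n q i * T K n q ⟨0, i.pos⟩ := by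
  simp only [tauF, FreeAlgebra.lift_ι_apply]
  rw [if_pos h]

lemma tauF_ι' {i : Fin n} (h : ¬ i.val = 1) : tauF K n q (ι K i) = T K n q i := by
  simp only [tauF, FreeAlgebra.lift_ι_apply]
  rw [if_neg h]

lemma tauF_rel ⦃a b : FreeAlgebra K (Fin n)⦄ (h : heckeBRel K n q a b) :
    tauF K n q a = tauF K n q b := by
  induction h with
  | quad0 h =>
      rw [map_mul, map_one, tauF_ι' (i := ⟨0, h⟩) (by simp)]
      exact T0_sq h
  | quad i hi =>
      by_cases h1 : i.val = 1
      · rw [map_mul, map_sub, map_add, map_one, map_zero, AlgHom.commutes, tauF_ι1 h1]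
        exact conj_quad q _ _ (T0_sq i.pos) (Tquad i hi)
      · rw [map_mul, map_sub, map_add, map_one, map_zero, AlgHom.commutes, tauF_ι' h1]
        exact Tquad i hi
  | braid01 h =>
      rw [map_pow, map_pow, map_mul, map_mul, tauF_ι1 (i := ⟨1, h⟩) rfl,
        tauF_ι' (i := ⟨0, by omega⟩) (by simp)]
      exact conj_braid01 _ _ (T0_sq (by omega)) (Tbraid01 h)
  | comm i j h =>
      have hj1 : ¬ j.val = 1 := by omega
      by_cases hi1 : i.val = 1
      · rw [map_mul, map_mul, tauF_ι1 hi1, tauF_ι' hj1]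
        exact conj_comm _ _ _ (Tcomm ⟨0, i.pos⟩ j (show 0 + 2 ≤ j.val by omega))
          (Tcomm i j h)
      · rw [map_mul, map_mul, tauF_ι' hi1, tauF_ι' hj1]
        exact Tcomm i j h
  | braid i j hi hj =>
      have hj1 : ¬ j.val = 1 := by omega
      by_cases hi1 : i.val = 1
      · rw [map_mul, map_mul, map_mul, map_mul, tauF_ι1 hi1, tauF_ι' hj1]
        exact conj_braid _ _ _ (T0_sq i.pos)
          (Tcomm ⟨0, i.pos⟩ j (show 0 + 2 ≤ j.val by omega)) (Tbraid i j hi hj)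
      · rw [map_mul, map_mul, map_mul, map_mul, tauF_ι' hi1, tauF_ι' hj1]
        exact Tbraid i j hi hj

variable (K n q) in
def tauH : HeckeB K n q →ₐ[K] HeckeB K n q :=
  RingQuot.liftAlgHom K ⟨tauF K n q, tauF_rel⟩

lemma tauH_T1 {i : Fin n} (h : i.val = 1) :
    tauH K n q (T K n q i) = T K n q ⟨0, i.pos⟩ * T K n q i * T K n q ⟨0, i.pos⟩ := by
  rw [tauH, T, RingQuot.liftAlgHom_mkAlgHom_apply, tauF_ι1 h]; rfl

lemma tauH_T' {i : Fin n} (h : ¬ i.val = 1) : tauH K n q (T K n q i) = T K n q i := by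
  rw [tauH, T, RingQuot.liftAlgHom_mkAlgHom_apply, tauF_ι' h]; rfl

/-! ### Involutivity and commutation -/

lemma sigma_invol : (sigmaH K n q).comp (sigmaH K n q) = AlgHom.id K (HeckeB K n q) :=
  heckeB_hom_ext fun i => by
    by_cases h : i.val = 0
    · rw [AlgHom.comp_apply, sigmaH_T0 h, map_neg, sigmaH_T0 h, neg_neg, AlgHom.id_apply]
    · rw [AlgHom.comp_apply, sigmaH_T1 h, sigmaH_T1 h, AlgHom.id_apply]

lemma tau_invol : (tauH K n q).comp (tauH K n q) = AlgHom.id K (HeckeB K n q) :=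
  heckeB_hom_ext fun i => by
    by_cases h : i.val = 1
    · rw [AlgHom.comp_apply, tauH_T1 h, map_mul, map_mul,
        tauH_T' (i := ⟨0, i.pos⟩) (by simp), tauH_T1 h, AlgHom.id_apply]
      exact conj_invol _ _ (T0_sq i.pos)
    · rw [AlgHom.comp_apply, tauH_T' h, tauH_T' h, AlgHom.id_apply]

lemma sigma_tau_comm :
    (sigmaH K n q).comp (tauH K n q) = (tauH K n q).comp (sigmaH K n q) :=
  heckeB_hom_ext fun i => by
    rw [AlgHom.comp_apply, AlgHom.comp_apply]
    by_cases h0 : i.val = 0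
    · rw [tauH_T' (by omega), sigmaH_T0 h0, map_neg, tauH_T' (by omega)]
    · by_cases h1 : i.val = 1
      · rw [tauH_T1 h1, map_mul, map_mul, sigmaH_T0 (i := ⟨0, i.pos⟩) rfl, sigmaH_T1 h0,
          tauH_T1 h1]
        exact neg_conj _ _
      · rw [tauH_T' h1, sigmaH_T1 h0, tauH_T' h1]

variable (K n q)

/-- The assignments `σ(T₀) = -T₀`, `σ(Tᵢ) = Tᵢ` for `i ≥ 1`, and `τ(T₁) = T₀T₁T₀`,
`τ(Tᵢ) = Tᵢ` for `i ≠ 1`, extend to algebra automorphisms `σ, τ` of `H_n(q, 1)`,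
and these automorphisms commute: `στ = τσ`. -/
theorem heckeB_automorphisms_sigma_tau (hn : 2 ≤ n) (hq0 : q ≠ 0) (hq1 : q ≠ 1) :
    ∃ σ τ : HeckeB K n q ≃ₐ[K] HeckeB K n q,
      σ (T K n q ⟨0, by omega⟩) = -(T K n q ⟨0, by omega⟩) ∧
      (∀ i : Fin n, 1 ≤ i.val → σ (T K n q i) = T K n q i) ∧
      τ (T K n q ⟨1, by omega⟩) =
        T K n q ⟨0, by omega⟩ * T K n q ⟨1, by omega⟩ * T K n q ⟨0, by omega⟩ ∧
      (∀ i : Fin n, i.val ≠ 1 → τ (T K n q i) = T K n q i) ∧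
      (∀ x, σ (τ x) = τ (σ x)) := by
  refine ⟨AlgEquiv.ofAlgHom (sigmaH K n q) (sigmaH K n q) sigma_invol sigma_invol,
    AlgEquiv.ofAlgHom (tauH K n q) (tauH K n q) tau_invol tau_invol, ?_, ?_, ?_, ?_, ?_⟩
  · show sigmaH K n q _ = _
    exact sigmaH_T0 rfl
  · intro i hi
    show sigmaH K n q _ = _
    exact sigmaH_T1 (by omega)
  · show tauH K n q _ = _
    exact tauH_T1 rfl
  · intro i hi
    show tauH K n q _ = _
    exact tauH_T' hi
  · intro x
    show sigmaH K n q (tauH K n q x) = tauH K n q (sigmaH K n q x)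
    exact AlgHom.congr_fun sigma_tau_comm x

end
end

section
/- In the bounded quiver algebra KQ/I of Lemma on the quiver 1 ⇄ 2 ⇄ 3 ⇄ 4 with arrows α₁,α₂,α₃ forward and β₁,β₂,β₃ backward, subject to α₁α₂α₃ = 0, β₃β₂β₁ = 0, β₁α₁α₂ = α₂α₃β₃, β₂β₁α₁ = α₃β₃β₂, α₁β₁α₁ = α₁α₂β₂, β₁α₁β₁ = α₂β₂β₁, α₂β₂α₂ = 0 = β₂α₂β₂, α₃β₃α₃ = β₂α₂α₃, β₃α₃β₃ = β₃β₂α₂, and all paths of length ≥ 5 equal to 0: the indecomposable projective e₁·(KQ/I) has dimension 6 and e₂·(KQ/I) has dimension 9. -/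
noncomputable section

open FreeAlgebra

/-- Generators of the bounded quiver algebra on the quiver `1 ⇄ 2 ⇄ 3 ⇄ 4`:
the vertex idempotents `e₁, e₂, e₃, e₄` (indices 0–3), the forward arrows
`α₁ : 1 → 2`, `α₂ : 2 → 3`, `α₃ : 3 → 4` (indices 4–6) and the backward arrows
`β₁ : 2 → 1`, `β₂ : 3 → 2`, `β₃ : 4 → 3` (indices 7–9). -/
abbrev Q4Gen := Fin 10

/-- The defining relations of the bounded quiver algebra `KQ/I`: the `eᵢ` are
orthogonal idempotents summing to `1`, the arrows have the indicated sources and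
targets (paths are composed left to right), together with the relations
`α₁α₂α₃ = 0`, `β₃β₂β₁ = 0`, `β₁α₁α₂ = α₂α₃β₃`, `β₂β₁α₁ = α₃β₃β₂`,
`α₁β₁α₁ = α₁α₂β₂`, `β₁α₁β₁ = α₂β₂β₁`, `α₂β₂α₂ = 0 = β₂α₂β₂`,
`α₃β₃α₃ = β₂α₂α₃`, `β₃α₃β₃ = β₃β₂α₂`, and all paths of length `≥ 5` equal to zero. -/
inductive q4Rel (K : Type) [Field K] :
    FreeAlgebra K Q4Gen → FreeAlgebra K Q4Gen → Prop
  | sum : q4Rel K (ι K 0 + ι K 1 + ι K 2 + ι K 3) 1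
  | idem (i : Fin 10) (h : i.val < 4) : q4Rel K (ι K i * ι K i) (ι K i)
  | orth (i j : Fin 10) (hi : i.val < 4) (hj : j.val < 4) (hij : i ≠ j) :
      q4Rel K (ι K i * ι K j) 0
  -- sources and targets of the arrows: `αᵢ = eᵢ αᵢ e_{i+1}`, `βᵢ = e_{i+1} βᵢ eᵢ`
  | arr_src (i : Fin 3) : q4Rel K (ι K ⟨i.val, by omega⟩ * ι K ⟨4 + i.val, by omega⟩)
      (ι K ⟨4 + i.val, by omega⟩)
  | arr_tgt (i : Fin 3) : q4Rel K (ι K ⟨4 + i.val, by omega⟩ * ι K ⟨i.val + 1, by omega⟩)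
      (ι K ⟨4 + i.val, by omega⟩)
  | back_src (i : Fin 3) : q4Rel K (ι K ⟨i.val + 1, by omega⟩ * ι K ⟨7 + i.val, by omega⟩)
      (ι K ⟨7 + i.val, by omega⟩)
  | back_tgt (i : Fin 3) : q4Rel K (ι K ⟨7 + i.val, by omega⟩ * ι K ⟨i.val, by omega⟩)
      (ι K ⟨7 + i.val, by omega⟩)
  | rel1 : q4Rel K (ι K 4 * ι K 5 * ι K 6) 0
  | rel2 : q4Rel K (ι K 9 * ι K 8 * ι K 7) 0
  | rel3 : q4Rel K (ι K 7 * ι K 4 * ι K 5) (ι K 5 * ι K 6 * ι K 9)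
  | rel4 : q4Rel K (ι K 8 * ι K 7 * ι K 4) (ι K 6 * ι K 9 * ι K 8)
  | rel5 : q4Rel K (ι K 4 * ι K 7 * ι K 4) (ι K 4 * ι K 5 * ι K 8)
  | rel6 : q4Rel K (ι K 7 * ι K 4 * ι K 7) (ι K 5 * ι K 8 * ι K 7)
  | rel7 : q4Rel K (ι K 5 * ι K 8 * ι K 5) 0
  | rel8 : q4Rel K (ι K 8 * ι K 5 * ι K 8) 0
  | rel9 : q4Rel K (ι K 6 * ι K 9 * ι K 6) (ι K 8 * ι K 5 * ι K 6)
  | rel10 : q4Rel K (ι K 9 * ι K 6 * ι K 9) (ι K 9 * ι K 8 * ι K 5)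
  | long (a b c d e : Fin 10) (ha : 4 ≤ a.val) (hb : 4 ≤ b.val) (hc : 4 ≤ c.val)
      (hd : 4 ≤ d.val) (he : 4 ≤ e.val) :
      q4Rel K (ι K a * ι K b * ι K c * ι K d * ι K e) 0

/-- The bounded quiver algebra `KQ/I` of the Lemma. -/
abbrev Q4Alg (K : Type) [Field K] : Type := RingQuot (q4Rel K)

variable (K : Type) [Field K]

/-- The images of the generators in `KQ/I`. -/
def q (i : Q4Gen) : Q4Alg K := RingQuot.mkAlgHom K (q4Rel K) (ι K i)

-- ### Auxiliary development
def fA : Fin 10 → Fin 30 → Option (Fin 30) :=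
 ![
  ![some 0, none, none, none, none, none, some 6, none, none, none, none, some 11, none, none, none, none, none, some 17, none, none, none, none, some 22, none, none, none, some 26, none, none, none],
  ![none, some 1, none, none, some 4, none, none, none, some 8, none, none, none, none, some 13, some 14, none, none, none, none, some 19, some 20, none, none, none, some 24, none, none, some 27, none, none],
  ![none, none, some 2, none, none, some 5, none, none, none, some 9, some 10, none, none, none, none, some 15, some 16, none, none, none, none, some 21, none, none, none, some 25, none, none, some 28, none],
  ![none, none, none, some 3, none, none, none, some 7, none, none, none, none, some 12, none, none, none, none, none, some 18, none, none, none, none, some 23, none, none, none, none, none, some 29],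
  ![some 4, none, none, none, none, none, some 14, none, none, none, none, some 20, none, none, none, none, none, some 24, none, none, none, none, some 27, none, none, none, none, none, none, none],
  ![none, some 5, none, none, some 10, none, none, none, some 16, none, none, none, none, none, some 21, none, none, none, none, some 25, none, none, none, none, some 28, none, none, none, none, none],
  ![none, none, some 7, none, none, some 12, none, none, none, some 18, none, none, none, none, none, some 23, some 23, none, none, none, none, none, none, none, none, some 29, none, none, none, none],
  ![none, some 6, none, none, some 11, none, none, none, some 17, none, none, none, none, some 22, some 22, none, none, none, none, none, some 26, none, none, none, none, none, none, none, none, none],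
  ![none, none, some 8, none, none, some 13, none, none, none, some 19, some 20, none, none, none, none, some 24, none, none, none, none, none, some 27, none, none, none, none, none, none, none, none],
  ![none, none, none, some 9, none, none, none, some 15, none, none, none, none, some 21, none, none, none, none, none, some 25, none, none, none, none, some 28, none, none, none, none, none, none]]

def deg : Fin 30 → ℕ := ![0, 0, 0, 0, 1, 1, 1, 1, 1, 1, 2, 2, 2, 2, 2, 2, 2, 2, 2, 2, 3, 3, 3, 3, 3, 3, 4, 4, 4, 4]

def PM {K : Type} [Field K] (h : Fin 30 → Option (Fin 30)) : Matrix (Fin 30) (Fin 30) K :=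
  Matrix.of fun i j => if h i = some j then 1 else 0

lemma PM_mul {K : Type} [Field K] (g h : Fin 30 → Option (Fin 30)) :
    (PM (K := K) g) * PM h = PM (fun i => (g i).bind h) := by
  ext i j
  simp only [PM, Matrix.mul_apply, Matrix.of_apply]
  obtain hg | ⟨k, hg⟩ : g i = none ∨ ∃ k, g i = some k := by
    cases g i; exacts [Or.inl rfl, Or.inr ⟨_, rfl⟩]
  · simp [hg]
  · simp only [hg]
    rw [Finset.sum_eq_single k]
    · simp
    · intro b _ hb
      simp [Option.some.injEq, Ne.symm hb]
    · intro hk; exact absurd (Finset.mem_univ k) hk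

lemma PM_eq_zero {K : Type} [Field K] {h : Fin 30 → Option (Fin 30)}
    (hz : ∀ i, h i = none) : PM (K := K) h = 0 := by
  ext i j; simp [PM, hz]

lemma PM_congr {K : Type} [Field K] {g h : Fin 30 → Option (Fin 30)}
    (e : ∀ i, g i = h i) : PM (K := K) g = PM h :=
  congrArg _ (funext e)

lemma PM_sum {K : Type} [Field K] :
    PM (K := K) (fA 0) + PM (fA 1) + PM (fA 2) + PM (fA 3) = 1 := by
  ext i j
  have h : ((if fA 0 i = some j then (1:ℕ) else 0) + (if fA 1 i = some j then 1 else 0)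
      + (if fA 2 i = some j then 1 else 0)) + (if fA 3 i = some j then 1 else 0)
      = if i = j then 1 else 0 := by revert j; revert i; decide
  have h2 := congrArg (fun n : ℕ => (n : K)) h
  push_cast at h2
  simpa [PM, Matrix.one_apply] using h2

lemma row_single {K : Type} [Field K] (h : Fin 30 → Option (Fin 30)) (i0 j0 : Fin 30)
    (hh : h i0 = some j0) : (PM (K := K) h) i0 = Pi.single j0 1 := by
  funext j
  simp only [PM, Matrix.of_apply, hh, Option.some.injEq, Pi.single_apply]
  by_cases hj : j0 = j
  · simp [hj]
  · simp [hj, Ne.symm hj]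

lemma aux_deg : ∀ g : Fin 10, 4 ≤ g.val → ∀ i : Fin 30, ∀ j, fA g i = some j →
    deg j = deg i + 1 := by decide

lemma deg_le : ∀ i : Fin 30, deg i ≤ 4 := by decide

lemma bind_deg {o : Option (Fin 30)} {g : Fin 10} (hg : 4 ≤ g.val) {n : ℕ}
    (ho : ∀ j, o = some j → n ≤ deg j) :
    ∀ j, o.bind (fA g) = some j → n + 1 ≤ deg j := by
  intro j hj
  rcases o with _ | k
  · simp at hj
  · simp only [Option.bind_some] at hj
    have h1 := aux_deg g hg k j hj
    have h2 := ho k rfl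
    omega

lemma long_none (a b c d e : Fin 10) (ha : 4 ≤ a.val) (hb : 4 ≤ b.val) (hc : 4 ≤ c.val)
    (hd : 4 ≤ d.val) (he : 4 ≤ e.val) (i : Fin 30) :
    ((((fA a i).bind (fA b)).bind (fA c)).bind (fA d)).bind (fA e) = none := by
  have h5 : ∀ j, ((((fA a i).bind (fA b)).bind (fA c)).bind (fA d)).bind (fA e) = some j →
      5 ≤ deg j :=
    bind_deg he (bind_deg hd (bind_deg hc (bind_deg hb
      (fun j hj => by have := aux_deg a ha i j hj; omega))))
  rcases hh : ((((fA a i).bind (fA b)).bind (fA c)).bind (fA d)).bind (fA e) with _ | j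
  · rfl
  · exact absurd (deg_le j) (by have := h5 j hh; omega)


def phi (K : Type) [Field K] : FreeAlgebra K Q4Gen →ₐ[K] Matrix (Fin 30) (Fin 30) K :=
  FreeAlgebra.lift K fun g => PM (fA g)

lemma phi_ι {K : Type} [Field K] (g : Q4Gen) : phi K (ι K g) = PM (fA g) :=
  FreeAlgebra.lift_ι_apply _ _

lemma phi_rel {K : Type} [Field K] : ∀ ⦃x y : FreeAlgebra K Q4Gen⦄, q4Rel K x y →
    phi K x = phi K y := by
  intro x y h
  induction h with
  | sum => simp only [map_add, map_one, phi_ι]; exact PM_sum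
  | idem i h =>
      simp only [map_mul, phi_ι, PM_mul]
      exact PM_congr (by revert h; revert i; decide)
  | orth i j hi hj hij =>
      simp only [map_mul, map_zero, phi_ι, PM_mul]
      refine PM_eq_zero ?_
      revert hij; revert hj; revert hi; revert j; revert i
      decide
  | arr_src i =>
      simp only [map_mul, phi_ι, PM_mul]
      exact PM_congr (by revert i; decide)
  | arr_tgt i =>
      simp only [map_mul, phi_ι, PM_mul]
      exact PM_congr (by revert i; decide)
  | back_src i =>
      simp only [map_mul, phi_ι, PM_mul]
      exact PM_congr (by revert i; decide)
  | back_tgt i =>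
      simp only [map_mul, phi_ι, PM_mul]
      exact PM_congr (by revert i; decide)
  | rel1 => simp only [map_mul, map_zero, phi_ι, PM_mul]; exact PM_eq_zero (by decide)
  | rel2 => simp only [map_mul, map_zero, phi_ι, PM_mul]; exact PM_eq_zero (by decide)
  | rel3 => simp only [map_mul, phi_ι, PM_mul]; exact PM_congr (by decide)
  | rel4 => simp only [map_mul, phi_ι, PM_mul]; exact PM_congr (by decide)
  | rel5 => simp only [map_mul, phi_ι, PM_mul]; exact PM_congr (by decide)
  | rel6 => simp only [map_mul, phi_ι, PM_mul]; exact PM_congr (by decide)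
  | rel7 => simp only [map_mul, map_zero, phi_ι, PM_mul]; exact PM_eq_zero (by decide)
  | rel8 => simp only [map_mul, map_zero, phi_ι, PM_mul]; exact PM_eq_zero (by decide)
  | rel9 => simp only [map_mul, phi_ι, PM_mul]; exact PM_congr (by decide)
  | rel10 => simp only [map_mul, phi_ι, PM_mul]; exact PM_congr (by decide)
  | long a b c d e ha hb hc hd he =>
      simp only [map_mul, map_zero, phi_ι, PM_mul]
      exact PM_eq_zero (long_none a b c d e ha hb hc hd he)

def Phi (K : Type) [Field K] : Q4Alg K →ₐ[K] Matrix (Fin 30) (Fin 30) K :=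
  RingQuot.liftAlgHom K ⟨phi K, phi_rel⟩

lemma Phi_q {K : Type} [Field K] (g : Q4Gen) : Phi K (q K g) = PM (fA g) := by
  show Phi K (RingQuot.mkAlgHom K (q4Rel K) (ι K g)) = _
  rw [Phi, RingQuot.liftAlgHom_mkAlgHom_apply]
  exact phi_ι g

def rowL (K : Type) [Field K] (i0 : Fin 30) :
    Matrix (Fin 30) (Fin 30) K →ₗ[K] (Fin 30 → K) where
  toFun M := M i0
  map_add' _ _ := rfl
  map_smul' _ _ := rfl

lemma single_indep {K : Type} [Field K] {n m : ℕ} (t : Fin n → Fin m)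
    (ht : Function.Injective t) :
    LinearIndependent K (fun k => (Pi.single (t k) 1 : Fin m → K)) := by
  rw [Fintype.linearIndependent_iff]
  intro c hc k
  have h := congrFun hc (t k)
  simp only [Finset.sum_apply, Pi.smul_apply, Pi.single_apply, smul_eq_mul,
    Pi.zero_apply] at h
  rw [Finset.sum_eq_single k] at h
  · simpa using h
  · intro b _ hb
    rw [if_neg fun e => hb (ht e.symm), mul_zero]
  · intro hk; exact absurd (Finset.mem_univ k) hk

section Rules
variable {K : Type} [Field K]

lemma qrel {x y : FreeAlgebra K Q4Gen} (h : q4Rel K x y) :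
    RingQuot.mkAlgHom K (q4Rel K) x = RingQuot.mkAlgHom K (q4Rel K) y :=
  RingQuot.mkAlgHom_rel K h

lemma sandwich {A : Type} [Semiring A] {a b u v : A} (ha : a * u = a) (hb : v * b = b)
    (huv : u * v = 0) : a * b = 0 := by
  rw [← ha, ← hb, mul_assoc, ← mul_assoc u, huv, zero_mul, mul_zero]

lemma r_0_0 : q K 0 * q K 0 = q K 0 := by
  have := qrel (K := K) (q4Rel.idem 0 (by decide)); rwa [map_mul] at this

lemma r_0_1 : q K 0 * q K 1 = 0 := by
  have := qrel (K := K) (q4Rel.orth 0 1 (by decide) (by decide) (by decide)); rwa [map_mul, map_zero] at this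

lemma r_0_2 : q K 0 * q K 2 = 0 := by
  have := qrel (K := K) (q4Rel.orth 0 2 (by decide) (by decide) (by decide)); rwa [map_mul, map_zero] at this

lemma r_0_3 : q K 0 * q K 3 = 0 := by
  have := qrel (K := K) (q4Rel.orth 0 3 (by decide) (by decide) (by decide)); rwa [map_mul, map_zero] at this

lemma r_1_1 : q K 1 * q K 1 = q K 1 := by
  have := qrel (K := K) (q4Rel.idem 1 (by decide)); rwa [map_mul] at this

lemma r_1_0 : q K 1 * q K 0 = 0 := by
  have := qrel (K := K) (q4Rel.orth 1 0 (by decide) (by decide) (by decide)); rwa [map_mul, map_zero] at this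

lemma r_1_2 : q K 1 * q K 2 = 0 := by
  have := qrel (K := K) (q4Rel.orth 1 2 (by decide) (by decide) (by decide)); rwa [map_mul, map_zero] at this

lemma r_1_3 : q K 1 * q K 3 = 0 := by
  have := qrel (K := K) (q4Rel.orth 1 3 (by decide) (by decide) (by decide)); rwa [map_mul, map_zero] at this

lemma r_2_2 : q K 2 * q K 2 = q K 2 := by
  have := qrel (K := K) (q4Rel.idem 2 (by decide)); rwa [map_mul] at this

lemma r_2_0 : q K 2 * q K 0 = 0 := by
  have := qrel (K := K) (q4Rel.orth 2 0 (by decide) (by decide) (by decide)); rwa [map_mul, map_zero] at this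

lemma r_2_1 : q K 2 * q K 1 = 0 := by
  have := qrel (K := K) (q4Rel.orth 2 1 (by decide) (by decide) (by decide)); rwa [map_mul, map_zero] at this

lemma r_2_3 : q K 2 * q K 3 = 0 := by
  have := qrel (K := K) (q4Rel.orth 2 3 (by decide) (by decide) (by decide)); rwa [map_mul, map_zero] at this

lemma r_3_3 : q K 3 * q K 3 = q K 3 := by
  have := qrel (K := K) (q4Rel.idem 3 (by decide)); rwa [map_mul] at this

lemma r_3_0 : q K 3 * q K 0 = 0 := by
  have := qrel (K := K) (q4Rel.orth 3 0 (by decide) (by decide) (by decide)); rwa [map_mul, map_zero] at this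

lemma r_3_1 : q K 3 * q K 1 = 0 := by
  have := qrel (K := K) (q4Rel.orth 3 1 (by decide) (by decide) (by decide)); rwa [map_mul, map_zero] at this

lemma r_3_2 : q K 3 * q K 2 = 0 := by
  have := qrel (K := K) (q4Rel.orth 3 2 (by decide) (by decide) (by decide)); rwa [map_mul, map_zero] at this

lemma r_0_4 : q K 0 * q K 4 = q K 4 := by
  have := qrel (K := K) (q4Rel.arr_src 0); rwa [map_mul] at this

lemma r_4_1 : q K 4 * q K 1 = q K 4 := by
  have := qrel (K := K) (q4Rel.arr_tgt 0); rwa [map_mul] at this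

lemma r_1_5 : q K 1 * q K 5 = q K 5 := by
  have := qrel (K := K) (q4Rel.arr_src 1); rwa [map_mul] at this

lemma r_5_2 : q K 5 * q K 2 = q K 5 := by
  have := qrel (K := K) (q4Rel.arr_tgt 1); rwa [map_mul] at this

lemma r_2_6 : q K 2 * q K 6 = q K 6 := by
  have := qrel (K := K) (q4Rel.arr_src 2); rwa [map_mul] at this

lemma r_6_3 : q K 6 * q K 3 = q K 6 := by
  have := qrel (K := K) (q4Rel.arr_tgt 2); rwa [map_mul] at this

lemma r_1_7 : q K 1 * q K 7 = q K 7 := by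
  have := qrel (K := K) (q4Rel.back_src 0); rwa [map_mul] at this

lemma r_7_0 : q K 7 * q K 0 = q K 7 := by
  have := qrel (K := K) (q4Rel.back_tgt 0); rwa [map_mul] at this

lemma r_2_8 : q K 2 * q K 8 = q K 8 := by
  have := qrel (K := K) (q4Rel.back_src 1); rwa [map_mul] at this

lemma r_8_1 : q K 8 * q K 1 = q K 8 := by
  have := qrel (K := K) (q4Rel.back_tgt 1); rwa [map_mul] at this

lemma r_3_9 : q K 3 * q K 9 = q K 9 := by
  have := qrel (K := K) (q4Rel.back_src 2); rwa [map_mul] at this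

lemma r_9_2 : q K 9 * q K 2 = q K 9 := by
  have := qrel (K := K) (q4Rel.back_tgt 2); rwa [map_mul] at this

lemma r_0_5 : q K 0 * q K 5 = 0 :=
  sandwich r_0_0 r_1_5 r_0_1

lemma r_0_6 : q K 0 * q K 6 = 0 :=
  sandwich r_0_0 r_2_6 r_0_2

lemma r_0_7 : q K 0 * q K 7 = 0 :=
  sandwich r_0_0 r_1_7 r_0_1

lemma r_0_8 : q K 0 * q K 8 = 0 :=
  sandwich r_0_0 r_2_8 r_0_2

lemma r_0_9 : q K 0 * q K 9 = 0 :=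
  sandwich r_0_0 r_3_9 r_0_3

lemma r_1_4 : q K 1 * q K 4 = 0 :=
  sandwich r_1_1 r_0_4 r_1_0

lemma r_1_6 : q K 1 * q K 6 = 0 :=
  sandwich r_1_1 r_2_6 r_1_2

lemma r_1_8 : q K 1 * q K 8 = 0 :=
  sandwich r_1_1 r_2_8 r_1_2

lemma r_1_9 : q K 1 * q K 9 = 0 :=
  sandwich r_1_1 r_3_9 r_1_3

lemma r_2_4 : q K 2 * q K 4 = 0 :=
  sandwich r_2_2 r_0_4 r_2_0

lemma r_2_5 : q K 2 * q K 5 = 0 :=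
  sandwich r_2_2 r_1_5 r_2_1

lemma r_2_7 : q K 2 * q K 7 = 0 :=
  sandwich r_2_2 r_1_7 r_2_1

lemma r_2_9 : q K 2 * q K 9 = 0 :=
  sandwich r_2_2 r_3_9 r_2_3

lemma r_3_4 : q K 3 * q K 4 = 0 :=
  sandwich r_3_3 r_0_4 r_3_0

lemma r_3_5 : q K 3 * q K 5 = 0 :=
  sandwich r_3_3 r_1_5 r_3_1

lemma r_3_6 : q K 3 * q K 6 = 0 :=
  sandwich r_3_3 r_2_6 r_3_2

lemma r_3_7 : q K 3 * q K 7 = 0 :=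
  sandwich r_3_3 r_1_7 r_3_1

lemma r_3_8 : q K 3 * q K 8 = 0 :=
  sandwich r_3_3 r_2_8 r_3_2

lemma r_4_0 : q K 4 * q K 0 = 0 :=
  sandwich r_4_1 r_0_0 r_1_0

lemma r_4_2 : q K 4 * q K 2 = 0 :=
  sandwich r_4_1 r_2_2 r_1_2

lemma r_4_3 : q K 4 * q K 3 = 0 :=
  sandwich r_4_1 r_3_3 r_1_3

lemma r_5_0 : q K 5 * q K 0 = 0 :=
  sandwich r_5_2 r_0_0 r_2_0

lemma r_5_1 : q K 5 * q K 1 = 0 :=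
  sandwich r_5_2 r_1_1 r_2_1

lemma r_5_3 : q K 5 * q K 3 = 0 :=
  sandwich r_5_2 r_3_3 r_2_3

lemma r_6_0 : q K 6 * q K 0 = 0 :=
  sandwich r_6_3 r_0_0 r_3_0

lemma r_6_1 : q K 6 * q K 1 = 0 :=
  sandwich r_6_3 r_1_1 r_3_1

lemma r_6_2 : q K 6 * q K 2 = 0 :=
  sandwich r_6_3 r_2_2 r_3_2

lemma r_7_1 : q K 7 * q K 1 = 0 :=
  sandwich r_7_0 r_1_1 r_0_1

lemma r_7_2 : q K 7 * q K 2 = 0 :=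
  sandwich r_7_0 r_2_2 r_0_2

lemma r_7_3 : q K 7 * q K 3 = 0 :=
  sandwich r_7_0 r_3_3 r_0_3

lemma r_8_0 : q K 8 * q K 0 = 0 :=
  sandwich r_8_1 r_0_0 r_1_0

lemma r_8_2 : q K 8 * q K 2 = 0 :=
  sandwich r_8_1 r_2_2 r_1_2

lemma r_8_3 : q K 8 * q K 3 = 0 :=
  sandwich r_8_1 r_3_3 r_1_3

lemma r_9_0 : q K 9 * q K 0 = 0 :=
  sandwich r_9_2 r_0_0 r_2_0

lemma r_9_1 : q K 9 * q K 1 = 0 :=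
  sandwich r_9_2 r_1_1 r_2_1

lemma r_9_3 : q K 9 * q K 3 = 0 :=
  sandwich r_9_2 r_3_3 r_2_3

lemma r_4_4 : q K 4 * q K 4 = 0 :=
  sandwich r_4_1 r_0_4 r_1_0

lemma r_4_6 : q K 4 * q K 6 = 0 :=
  sandwich r_4_1 r_2_6 r_1_2

lemma r_4_8 : q K 4 * q K 8 = 0 :=
  sandwich r_4_1 r_2_8 r_1_2

lemma r_4_9 : q K 4 * q K 9 = 0 :=
  sandwich r_4_1 r_3_9 r_1_3

lemma r_5_4 : q K 5 * q K 4 = 0 :=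
  sandwich r_5_2 r_0_4 r_2_0

lemma r_5_5 : q K 5 * q K 5 = 0 :=
  sandwich r_5_2 r_1_5 r_2_1

lemma r_5_7 : q K 5 * q K 7 = 0 :=
  sandwich r_5_2 r_1_7 r_2_1

lemma r_5_9 : q K 5 * q K 9 = 0 :=
  sandwich r_5_2 r_3_9 r_2_3

lemma r_6_4 : q K 6 * q K 4 = 0 :=
  sandwich r_6_3 r_0_4 r_3_0

lemma r_6_5 : q K 6 * q K 5 = 0 :=
  sandwich r_6_3 r_1_5 r_3_1

lemma r_6_6 : q K 6 * q K 6 = 0 :=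
  sandwich r_6_3 r_2_6 r_3_2

lemma r_6_7 : q K 6 * q K 7 = 0 :=
  sandwich r_6_3 r_1_7 r_3_1

lemma r_6_8 : q K 6 * q K 8 = 0 :=
  sandwich r_6_3 r_2_8 r_3_2

lemma r_7_5 : q K 7 * q K 5 = 0 :=
  sandwich r_7_0 r_1_5 r_0_1

lemma r_7_6 : q K 7 * q K 6 = 0 :=
  sandwich r_7_0 r_2_6 r_0_2

lemma r_7_7 : q K 7 * q K 7 = 0 :=
  sandwich r_7_0 r_1_7 r_0_1

lemma r_7_8 : q K 7 * q K 8 = 0 :=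
  sandwich r_7_0 r_2_8 r_0_2

lemma r_7_9 : q K 7 * q K 9 = 0 :=
  sandwich r_7_0 r_3_9 r_0_3

lemma r_8_4 : q K 8 * q K 4 = 0 :=
  sandwich r_8_1 r_0_4 r_1_0

lemma r_8_6 : q K 8 * q K 6 = 0 :=
  sandwich r_8_1 r_2_6 r_1_2

lemma r_8_8 : q K 8 * q K 8 = 0 :=
  sandwich r_8_1 r_2_8 r_1_2

lemma r_8_9 : q K 8 * q K 9 = 0 :=
  sandwich r_8_1 r_3_9 r_1_3

lemma r_9_4 : q K 9 * q K 4 = 0 :=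
  sandwich r_9_2 r_0_4 r_2_0

lemma r_9_5 : q K 9 * q K 5 = 0 :=
  sandwich r_9_2 r_1_5 r_2_1

lemma r_9_7 : q K 9 * q K 7 = 0 :=
  sandwich r_9_2 r_1_7 r_2_1

lemma r_9_9 : q K 9 * q K 9 = 0 :=
  sandwich r_9_2 r_3_9 r_2_3

lemma xr_0_0 (x : Q4Alg K) : q K 0 * (q K 0 * x) = q K 0 * x := by
  rw [← mul_assoc, r_0_0]

lemma xr_0_1 (x : Q4Alg K) : q K 0 * (q K 1 * x) = 0 := by
  rw [← mul_assoc, r_0_1, zero_mul]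

lemma xr_0_2 (x : Q4Alg K) : q K 0 * (q K 2 * x) = 0 := by
  rw [← mul_assoc, r_0_2, zero_mul]

lemma xr_0_3 (x : Q4Alg K) : q K 0 * (q K 3 * x) = 0 := by
  rw [← mul_assoc, r_0_3, zero_mul]

lemma xr_0_4 (x : Q4Alg K) : q K 0 * (q K 4 * x) = q K 4 * x := by
  rw [← mul_assoc, r_0_4]

lemma xr_0_5 (x : Q4Alg K) : q K 0 * (q K 5 * x) = 0 := by
  rw [← mul_assoc, r_0_5, zero_mul]

lemma xr_0_6 (x : Q4Alg K) : q K 0 * (q K 6 * x) = 0 := by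
  rw [← mul_assoc, r_0_6, zero_mul]

lemma xr_0_7 (x : Q4Alg K) : q K 0 * (q K 7 * x) = 0 := by
  rw [← mul_assoc, r_0_7, zero_mul]

lemma xr_0_8 (x : Q4Alg K) : q K 0 * (q K 8 * x) = 0 := by
  rw [← mul_assoc, r_0_8, zero_mul]

lemma xr_0_9 (x : Q4Alg K) : q K 0 * (q K 9 * x) = 0 := by
  rw [← mul_assoc, r_0_9, zero_mul]

lemma xr_1_0 (x : Q4Alg K) : q K 1 * (q K 0 * x) = 0 := by
  rw [← mul_assoc, r_1_0, zero_mul]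

lemma xr_1_1 (x : Q4Alg K) : q K 1 * (q K 1 * x) = q K 1 * x := by
  rw [← mul_assoc, r_1_1]

lemma xr_1_2 (x : Q4Alg K) : q K 1 * (q K 2 * x) = 0 := by
  rw [← mul_assoc, r_1_2, zero_mul]

lemma xr_1_3 (x : Q4Alg K) : q K 1 * (q K 3 * x) = 0 := by
  rw [← mul_assoc, r_1_3, zero_mul]

lemma xr_1_4 (x : Q4Alg K) : q K 1 * (q K 4 * x) = 0 := by
  rw [← mul_assoc, r_1_4, zero_mul]

lemma xr_1_5 (x : Q4Alg K) : q K 1 * (q K 5 * x) = q K 5 * x := by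
  rw [← mul_assoc, r_1_5]

lemma xr_1_6 (x : Q4Alg K) : q K 1 * (q K 6 * x) = 0 := by
  rw [← mul_assoc, r_1_6, zero_mul]

lemma xr_1_7 (x : Q4Alg K) : q K 1 * (q K 7 * x) = q K 7 * x := by
  rw [← mul_assoc, r_1_7]

lemma xr_1_8 (x : Q4Alg K) : q K 1 * (q K 8 * x) = 0 := by
  rw [← mul_assoc, r_1_8, zero_mul]

lemma xr_1_9 (x : Q4Alg K) : q K 1 * (q K 9 * x) = 0 := by
  rw [← mul_assoc, r_1_9, zero_mul]

lemma xr_2_0 (x : Q4Alg K) : q K 2 * (q K 0 * x) = 0 := by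
  rw [← mul_assoc, r_2_0, zero_mul]

lemma xr_2_1 (x : Q4Alg K) : q K 2 * (q K 1 * x) = 0 := by
  rw [← mul_assoc, r_2_1, zero_mul]

lemma xr_2_2 (x : Q4Alg K) : q K 2 * (q K 2 * x) = q K 2 * x := by
  rw [← mul_assoc, r_2_2]

lemma xr_2_3 (x : Q4Alg K) : q K 2 * (q K 3 * x) = 0 := by
  rw [← mul_assoc, r_2_3, zero_mul]

lemma xr_2_4 (x : Q4Alg K) : q K 2 * (q K 4 * x) = 0 := by
  rw [← mul_assoc, r_2_4, zero_mul]

lemma xr_2_5 (x : Q4Alg K) : q K 2 * (q K 5 * x) = 0 := by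
  rw [← mul_assoc, r_2_5, zero_mul]

lemma xr_2_6 (x : Q4Alg K) : q K 2 * (q K 6 * x) = q K 6 * x := by
  rw [← mul_assoc, r_2_6]

lemma xr_2_7 (x : Q4Alg K) : q K 2 * (q K 7 * x) = 0 := by
  rw [← mul_assoc, r_2_7, zero_mul]

lemma xr_2_8 (x : Q4Alg K) : q K 2 * (q K 8 * x) = q K 8 * x := by
  rw [← mul_assoc, r_2_8]

lemma xr_2_9 (x : Q4Alg K) : q K 2 * (q K 9 * x) = 0 := by
  rw [← mul_assoc, r_2_9, zero_mul]

lemma xr_3_0 (x : Q4Alg K) : q K 3 * (q K 0 * x) = 0 := by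
  rw [← mul_assoc, r_3_0, zero_mul]

lemma xr_3_1 (x : Q4Alg K) : q K 3 * (q K 1 * x) = 0 := by
  rw [← mul_assoc, r_3_1, zero_mul]

lemma xr_3_2 (x : Q4Alg K) : q K 3 * (q K 2 * x) = 0 := by
  rw [← mul_assoc, r_3_2, zero_mul]

lemma xr_3_3 (x : Q4Alg K) : q K 3 * (q K 3 * x) = q K 3 * x := by
  rw [← mul_assoc, r_3_3]

lemma xr_3_4 (x : Q4Alg K) : q K 3 * (q K 4 * x) = 0 := by
  rw [← mul_assoc, r_3_4, zero_mul]

lemma xr_3_5 (x : Q4Alg K) : q K 3 * (q K 5 * x) = 0 := by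
  rw [← mul_assoc, r_3_5, zero_mul]

lemma xr_3_6 (x : Q4Alg K) : q K 3 * (q K 6 * x) = 0 := by
  rw [← mul_assoc, r_3_6, zero_mul]

lemma xr_3_7 (x : Q4Alg K) : q K 3 * (q K 7 * x) = 0 := by
  rw [← mul_assoc, r_3_7, zero_mul]

lemma xr_3_8 (x : Q4Alg K) : q K 3 * (q K 8 * x) = 0 := by
  rw [← mul_assoc, r_3_8, zero_mul]

lemma xr_3_9 (x : Q4Alg K) : q K 3 * (q K 9 * x) = q K 9 * x := by
  rw [← mul_assoc, r_3_9]

lemma xr_4_0 (x : Q4Alg K) : q K 4 * (q K 0 * x) = 0 := by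
  rw [← mul_assoc, r_4_0, zero_mul]

lemma xr_4_1 (x : Q4Alg K) : q K 4 * (q K 1 * x) = q K 4 * x := by
  rw [← mul_assoc, r_4_1]

lemma xr_4_2 (x : Q4Alg K) : q K 4 * (q K 2 * x) = 0 := by
  rw [← mul_assoc, r_4_2, zero_mul]

lemma xr_4_3 (x : Q4Alg K) : q K 4 * (q K 3 * x) = 0 := by
  rw [← mul_assoc, r_4_3, zero_mul]

lemma xr_4_4 (x : Q4Alg K) : q K 4 * (q K 4 * x) = 0 := by
  rw [← mul_assoc, r_4_4, zero_mul]

lemma xr_4_6 (x : Q4Alg K) : q K 4 * (q K 6 * x) = 0 := by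
  rw [← mul_assoc, r_4_6, zero_mul]

lemma xr_4_8 (x : Q4Alg K) : q K 4 * (q K 8 * x) = 0 := by
  rw [← mul_assoc, r_4_8, zero_mul]

lemma xr_4_9 (x : Q4Alg K) : q K 4 * (q K 9 * x) = 0 := by
  rw [← mul_assoc, r_4_9, zero_mul]

lemma xr_5_0 (x : Q4Alg K) : q K 5 * (q K 0 * x) = 0 := by
  rw [← mul_assoc, r_5_0, zero_mul]

lemma xr_5_1 (x : Q4Alg K) : q K 5 * (q K 1 * x) = 0 := by
  rw [← mul_assoc, r_5_1, zero_mul]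

lemma xr_5_2 (x : Q4Alg K) : q K 5 * (q K 2 * x) = q K 5 * x := by
  rw [← mul_assoc, r_5_2]

lemma xr_5_3 (x : Q4Alg K) : q K 5 * (q K 3 * x) = 0 := by
  rw [← mul_assoc, r_5_3, zero_mul]

lemma xr_5_4 (x : Q4Alg K) : q K 5 * (q K 4 * x) = 0 := by
  rw [← mul_assoc, r_5_4, zero_mul]

lemma xr_5_5 (x : Q4Alg K) : q K 5 * (q K 5 * x) = 0 := by
  rw [← mul_assoc, r_5_5, zero_mul]

lemma xr_5_7 (x : Q4Alg K) : q K 5 * (q K 7 * x) = 0 := by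
  rw [← mul_assoc, r_5_7, zero_mul]

lemma xr_5_9 (x : Q4Alg K) : q K 5 * (q K 9 * x) = 0 := by
  rw [← mul_assoc, r_5_9, zero_mul]

lemma xr_6_0 (x : Q4Alg K) : q K 6 * (q K 0 * x) = 0 := by
  rw [← mul_assoc, r_6_0, zero_mul]

lemma xr_6_1 (x : Q4Alg K) : q K 6 * (q K 1 * x) = 0 := by
  rw [← mul_assoc, r_6_1, zero_mul]

lemma xr_6_2 (x : Q4Alg K) : q K 6 * (q K 2 * x) = 0 := by
  rw [← mul_assoc, r_6_2, zero_mul]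

lemma xr_6_3 (x : Q4Alg K) : q K 6 * (q K 3 * x) = q K 6 * x := by
  rw [← mul_assoc, r_6_3]

lemma xr_6_4 (x : Q4Alg K) : q K 6 * (q K 4 * x) = 0 := by
  rw [← mul_assoc, r_6_4, zero_mul]

lemma xr_6_5 (x : Q4Alg K) : q K 6 * (q K 5 * x) = 0 := by
  rw [← mul_assoc, r_6_5, zero_mul]

lemma xr_6_6 (x : Q4Alg K) : q K 6 * (q K 6 * x) = 0 := by
  rw [← mul_assoc, r_6_6, zero_mul]

lemma xr_6_7 (x : Q4Alg K) : q K 6 * (q K 7 * x) = 0 := by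
  rw [← mul_assoc, r_6_7, zero_mul]

lemma xr_6_8 (x : Q4Alg K) : q K 6 * (q K 8 * x) = 0 := by
  rw [← mul_assoc, r_6_8, zero_mul]

lemma xr_7_0 (x : Q4Alg K) : q K 7 * (q K 0 * x) = q K 7 * x := by
  rw [← mul_assoc, r_7_0]

lemma xr_7_1 (x : Q4Alg K) : q K 7 * (q K 1 * x) = 0 := by
  rw [← mul_assoc, r_7_1, zero_mul]

lemma xr_7_2 (x : Q4Alg K) : q K 7 * (q K 2 * x) = 0 := by
  rw [← mul_assoc, r_7_2, zero_mul]

lemma xr_7_3 (x : Q4Alg K) : q K 7 * (q K 3 * x) = 0 := by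
  rw [← mul_assoc, r_7_3, zero_mul]

lemma xr_7_5 (x : Q4Alg K) : q K 7 * (q K 5 * x) = 0 := by
  rw [← mul_assoc, r_7_5, zero_mul]

lemma xr_7_6 (x : Q4Alg K) : q K 7 * (q K 6 * x) = 0 := by
  rw [← mul_assoc, r_7_6, zero_mul]

lemma xr_7_7 (x : Q4Alg K) : q K 7 * (q K 7 * x) = 0 := by
  rw [← mul_assoc, r_7_7, zero_mul]

lemma xr_7_8 (x : Q4Alg K) : q K 7 * (q K 8 * x) = 0 := by
  rw [← mul_assoc, r_7_8, zero_mul]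

lemma xr_7_9 (x : Q4Alg K) : q K 7 * (q K 9 * x) = 0 := by
  rw [← mul_assoc, r_7_9, zero_mul]

lemma xr_8_0 (x : Q4Alg K) : q K 8 * (q K 0 * x) = 0 := by
  rw [← mul_assoc, r_8_0, zero_mul]

lemma xr_8_1 (x : Q4Alg K) : q K 8 * (q K 1 * x) = q K 8 * x := by
  rw [← mul_assoc, r_8_1]

lemma xr_8_2 (x : Q4Alg K) : q K 8 * (q K 2 * x) = 0 := by
  rw [← mul_assoc, r_8_2, zero_mul]

lemma xr_8_3 (x : Q4Alg K) : q K 8 * (q K 3 * x) = 0 := by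
  rw [← mul_assoc, r_8_3, zero_mul]

lemma xr_8_4 (x : Q4Alg K) : q K 8 * (q K 4 * x) = 0 := by
  rw [← mul_assoc, r_8_4, zero_mul]

lemma xr_8_6 (x : Q4Alg K) : q K 8 * (q K 6 * x) = 0 := by
  rw [← mul_assoc, r_8_6, zero_mul]

lemma xr_8_8 (x : Q4Alg K) : q K 8 * (q K 8 * x) = 0 := by
  rw [← mul_assoc, r_8_8, zero_mul]

lemma xr_8_9 (x : Q4Alg K) : q K 8 * (q K 9 * x) = 0 := by
  rw [← mul_assoc, r_8_9, zero_mul]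

lemma xr_9_0 (x : Q4Alg K) : q K 9 * (q K 0 * x) = 0 := by
  rw [← mul_assoc, r_9_0, zero_mul]

lemma xr_9_1 (x : Q4Alg K) : q K 9 * (q K 1 * x) = 0 := by
  rw [← mul_assoc, r_9_1, zero_mul]

lemma xr_9_2 (x : Q4Alg K) : q K 9 * (q K 2 * x) = q K 9 * x := by
  rw [← mul_assoc, r_9_2]

lemma xr_9_3 (x : Q4Alg K) : q K 9 * (q K 3 * x) = 0 := by
  rw [← mul_assoc, r_9_3, zero_mul]

lemma xr_9_4 (x : Q4Alg K) : q K 9 * (q K 4 * x) = 0 := by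
  rw [← mul_assoc, r_9_4, zero_mul]

lemma xr_9_5 (x : Q4Alg K) : q K 9 * (q K 5 * x) = 0 := by
  rw [← mul_assoc, r_9_5, zero_mul]

lemma xr_9_7 (x : Q4Alg K) : q K 9 * (q K 7 * x) = 0 := by
  rw [← mul_assoc, r_9_7, zero_mul]

lemma xr_9_9 (x : Q4Alg K) : q K 9 * (q K 9 * x) = 0 := by
  rw [← mul_assoc, r_9_9, zero_mul]

lemma R1 : q K 4 * (q K 5 * q K 6) = 0 := by
  have := qrel (K := K) q4Rel.rel1
  simp only [map_mul, map_zero] at this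
  simpa only [mul_assoc, q] using this

lemma xR1 (x : Q4Alg K) : q K 4 * (q K 5 * (q K 6 * x)) = 0 := by
  have := congrArg (fun z => z * x) (R1 (K := K))
  simpa only [mul_assoc, zero_mul] using this

lemma R2 : q K 9 * (q K 8 * q K 7) = 0 := by
  have := qrel (K := K) q4Rel.rel2
  simp only [map_mul, map_zero] at this
  simpa only [mul_assoc, q] using this

lemma xR2 (x : Q4Alg K) : q K 9 * (q K 8 * (q K 7 * x)) = 0 := by
  have := congrArg (fun z => z * x) (R2 (K := K))
  simpa only [mul_assoc, zero_mul] using this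

lemma R3 : q K 7 * (q K 4 * q K 5) = q K 5 * (q K 6 * q K 9) := by
  have := qrel (K := K) q4Rel.rel3
  simp only [map_mul, map_zero] at this
  simpa only [mul_assoc, q] using this

lemma xR3 (x : Q4Alg K) : q K 7 * (q K 4 * (q K 5 * x)) = q K 5 * (q K 6 * (q K 9 * x)) := by
  have := congrArg (fun z => z * x) (R3 (K := K))
  simpa only [mul_assoc, zero_mul] using this

lemma R4 : q K 8 * (q K 7 * q K 4) = q K 6 * (q K 9 * q K 8) := by
  have := qrel (K := K) q4Rel.rel4
  simp only [map_mul, map_zero] at this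
  simpa only [mul_assoc, q] using this

lemma xR4 (x : Q4Alg K) : q K 8 * (q K 7 * (q K 4 * x)) = q K 6 * (q K 9 * (q K 8 * x)) := by
  have := congrArg (fun z => z * x) (R4 (K := K))
  simpa only [mul_assoc, zero_mul] using this

lemma R5 : q K 4 * (q K 7 * q K 4) = q K 4 * (q K 5 * q K 8) := by
  have := qrel (K := K) q4Rel.rel5
  simp only [map_mul, map_zero] at this
  simpa only [mul_assoc, q] using this

lemma xR5 (x : Q4Alg K) : q K 4 * (q K 7 * (q K 4 * x)) = q K 4 * (q K 5 * (q K 8 * x)) := by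
  have := congrArg (fun z => z * x) (R5 (K := K))
  simpa only [mul_assoc, zero_mul] using this

lemma R6 : q K 7 * (q K 4 * q K 7) = q K 5 * (q K 8 * q K 7) := by
  have := qrel (K := K) q4Rel.rel6
  simp only [map_mul, map_zero] at this
  simpa only [mul_assoc, q] using this

lemma xR6 (x : Q4Alg K) : q K 7 * (q K 4 * (q K 7 * x)) = q K 5 * (q K 8 * (q K 7 * x)) := by
  have := congrArg (fun z => z * x) (R6 (K := K))
  simpa only [mul_assoc, zero_mul] using this

lemma R7 : q K 5 * (q K 8 * q K 5) = 0 := by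
  have := qrel (K := K) q4Rel.rel7
  simp only [map_mul, map_zero] at this
  simpa only [mul_assoc, q] using this

lemma xR7 (x : Q4Alg K) : q K 5 * (q K 8 * (q K 5 * x)) = 0 := by
  have := congrArg (fun z => z * x) (R7 (K := K))
  simpa only [mul_assoc, zero_mul] using this

lemma R8 : q K 8 * (q K 5 * q K 8) = 0 := by
  have := qrel (K := K) q4Rel.rel8
  simp only [map_mul, map_zero] at this
  simpa only [mul_assoc, q] using this

lemma xR8 (x : Q4Alg K) : q K 8 * (q K 5 * (q K 8 * x)) = 0 := by
  have := congrArg (fun z => z * x) (R8 (K := K))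
  simpa only [mul_assoc, zero_mul] using this

lemma R9 : q K 6 * (q K 9 * q K 6) = q K 8 * (q K 5 * q K 6) := by
  have := qrel (K := K) q4Rel.rel9
  simp only [map_mul, map_zero] at this
  simpa only [mul_assoc, q] using this

lemma xR9 (x : Q4Alg K) : q K 6 * (q K 9 * (q K 6 * x)) = q K 8 * (q K 5 * (q K 6 * x)) := by
  have := congrArg (fun z => z * x) (R9 (K := K))
  simpa only [mul_assoc, zero_mul] using this

lemma R10 : q K 9 * (q K 6 * q K 9) = q K 9 * (q K 8 * q K 5) := by
  have := qrel (K := K) q4Rel.rel10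
  simp only [map_mul, map_zero] at this
  simpa only [mul_assoc, q] using this

lemma xR10 (x : Q4Alg K) : q K 9 * (q K 6 * (q K 9 * x)) = q K 9 * (q K 8 * (q K 5 * x)) := by
  have := congrArg (fun z => z * x) (R10 (K := K))
  simpa only [mul_assoc, zero_mul] using this

lemma L1 : q K 4 * (q K 5 * (q K 8 * (q K 7 * q K 4))) = 0 := by
  have := qrel (K := K) (q4Rel.long 4 5 8 7 4 (by decide) (by decide) (by decide) (by decide) (by decide))
  simp only [map_mul, map_zero] at this
  simpa only [mul_assoc, q] using this

lemma L2 : q K 5 * (q K 6 * (q K 9 * (q K 8 * q K 5))) = 0 := by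
  have := qrel (K := K) (q4Rel.long 5 6 9 8 5 (by decide) (by decide) (by decide) (by decide) (by decide))
  simp only [map_mul, map_zero] at this
  simpa only [mul_assoc, q] using this

lemma L3 : q K 5 * (q K 6 * (q K 9 * (q K 8 * q K 7))) = 0 := by
  have := qrel (K := K) (q4Rel.long 5 6 9 8 7 (by decide) (by decide) (by decide) (by decide) (by decide))
  simp only [map_mul, map_zero] at this
  simpa only [mul_assoc, q] using this

end Rules

def vW (K : Type) [Field K] : Fin 6 → Q4Alg K := ![q K 0, q K 4, q K 4 * (q K 5), q K 4 * (q K 7), q K 4 * (q K 5 * (q K 8)), q K 4 * (q K 5 * (q K 8 * (q K 7)))]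
def vU (K : Type) [Field K] : Fin 9 → Q4Alg K := ![q K 1, q K 5, q K 7, q K 5 * (q K 6), q K 5 * (q K 8), q K 7 * (q K 4), q K 5 * (q K 6 * (q K 9)), q K 5 * (q K 8 * (q K 7)), q K 5 * (q K 6 * (q K 9 * (q K 8)))]

def NW (K : Type) [Field K] : Submodule K (Q4Alg K) := Submodule.span K (Set.range (vW K))
def NU (K : Type) [Field K] : Submodule K (Q4Alg K) := Submodule.span K (Set.range (vU K))

lemma mW0 (K : Type) [Field K] : vW K 0 ∈ NW K :=
  Submodule.subset_span ⟨0, rfl⟩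
lemma mW1 (K : Type) [Field K] : vW K 1 ∈ NW K :=
  Submodule.subset_span ⟨1, rfl⟩
lemma mW2 (K : Type) [Field K] : vW K 2 ∈ NW K :=
  Submodule.subset_span ⟨2, rfl⟩
lemma mW3 (K : Type) [Field K] : vW K 3 ∈ NW K :=
  Submodule.subset_span ⟨3, rfl⟩
lemma mW4 (K : Type) [Field K] : vW K 4 ∈ NW K :=
  Submodule.subset_span ⟨4, rfl⟩
lemma mW5 (K : Type) [Field K] : vW K 5 ∈ NW K :=
  Submodule.subset_span ⟨5, rfl⟩

lemma mU0 (K : Type) [Field K] : vU K 0 ∈ NU K :=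
  Submodule.subset_span ⟨0, rfl⟩
lemma mU1 (K : Type) [Field K] : vU K 1 ∈ NU K :=
  Submodule.subset_span ⟨1, rfl⟩
lemma mU2 (K : Type) [Field K] : vU K 2 ∈ NU K :=
  Submodule.subset_span ⟨2, rfl⟩
lemma mU3 (K : Type) [Field K] : vU K 3 ∈ NU K :=
  Submodule.subset_span ⟨3, rfl⟩
lemma mU4 (K : Type) [Field K] : vU K 4 ∈ NU K :=
  Submodule.subset_span ⟨4, rfl⟩
lemma mU5 (K : Type) [Field K] : vU K 5 ∈ NU K :=
  Submodule.subset_span ⟨5, rfl⟩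
lemma mU6 (K : Type) [Field K] : vU K 6 ∈ NU K :=
  Submodule.subset_span ⟨6, rfl⟩
lemma mU7 (K : Type) [Field K] : vU K 7 ∈ NU K :=
  Submodule.subset_span ⟨7, rfl⟩
lemma mU8 (K : Type) [Field K] : vU K 8 ∈ NU K :=
  Submodule.subset_span ⟨8, rfl⟩

lemma stepW {K : Type} [Field K] : ∀ (k : Fin 6) (g : Fin 10), vW K k * q K g ∈ NW K := by
  intro k g
  fin_cases k <;> fin_cases g
  · show q K 0 * q K 0 ∈ NW K
    rw [r_0_0]
    exact mW0 K
  · show q K 0 * q K 1 ∈ NW K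
    rw [r_0_1]
    exact Submodule.zero_mem _
  · show q K 0 * q K 2 ∈ NW K
    rw [r_0_2]
    exact Submodule.zero_mem _
  · show q K 0 * q K 3 ∈ NW K
    rw [r_0_3]
    exact Submodule.zero_mem _
  · show q K 0 * q K 4 ∈ NW K
    rw [r_0_4]
    exact mW1 K
  · show q K 0 * q K 5 ∈ NW K
    rw [r_0_5]
    exact Submodule.zero_mem _
  · show q K 0 * q K 6 ∈ NW K
    rw [r_0_6]
    exact Submodule.zero_mem _
  · show q K 0 * q K 7 ∈ NW K
    rw [r_0_7]
    exact Submodule.zero_mem _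
  · show q K 0 * q K 8 ∈ NW K
    rw [r_0_8]
    exact Submodule.zero_mem _
  · show q K 0 * q K 9 ∈ NW K
    rw [r_0_9]
    exact Submodule.zero_mem _
  · show q K 4 * q K 0 ∈ NW K
    rw [r_4_0]
    exact Submodule.zero_mem _
  · show q K 4 * q K 1 ∈ NW K
    rw [r_4_1]
    exact mW1 K
  · show q K 4 * q K 2 ∈ NW K
    rw [r_4_2]
    exact Submodule.zero_mem _
  · show q K 4 * q K 3 ∈ NW K
    rw [r_4_3]
    exact Submodule.zero_mem _
  · show q K 4 * q K 4 ∈ NW K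
    rw [r_4_4]
    exact Submodule.zero_mem _
  · show q K 4 * q K 5 ∈ NW K
    exact mW2 K
  · show q K 4 * q K 6 ∈ NW K
    rw [r_4_6]
    exact Submodule.zero_mem _
  · show q K 4 * q K 7 ∈ NW K
    exact mW3 K
  · show q K 4 * q K 8 ∈ NW K
    rw [r_4_8]
    exact Submodule.zero_mem _
  · show q K 4 * q K 9 ∈ NW K
    rw [r_4_9]
    exact Submodule.zero_mem _
  · show q K 4 * (q K 5) * q K 0 ∈ NW K
    rw [mul_assoc]
    rw [r_5_0, mul_zero]
    exact Submodule.zero_mem _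
  · show q K 4 * (q K 5) * q K 1 ∈ NW K
    rw [mul_assoc]
    rw [r_5_1, mul_zero]
    exact Submodule.zero_mem _
  · show q K 4 * (q K 5) * q K 2 ∈ NW K
    rw [mul_assoc]
    rw [r_5_2]
    exact mW2 K
  · show q K 4 * (q K 5) * q K 3 ∈ NW K
    rw [mul_assoc]
    rw [r_5_3, mul_zero]
    exact Submodule.zero_mem _
  · show q K 4 * (q K 5) * q K 4 ∈ NW K
    rw [mul_assoc]
    rw [r_5_4, mul_zero]
    exact Submodule.zero_mem _
  · show q K 4 * (q K 5) * q K 5 ∈ NW K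
    rw [mul_assoc]
    rw [r_5_5, mul_zero]
    exact Submodule.zero_mem _
  · show q K 4 * (q K 5) * q K 6 ∈ NW K
    rw [mul_assoc]
    rw [R1]
    exact Submodule.zero_mem _
  · show q K 4 * (q K 5) * q K 7 ∈ NW K
    rw [mul_assoc]
    rw [r_5_7, mul_zero]
    exact Submodule.zero_mem _
  · show q K 4 * (q K 5) * q K 8 ∈ NW K
    rw [mul_assoc]
    exact mW4 K
  · show q K 4 * (q K 5) * q K 9 ∈ NW K
    rw [mul_assoc]
    rw [r_5_9, mul_zero]
    exact Submodule.zero_mem _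
  · show q K 4 * (q K 7) * q K 0 ∈ NW K
    rw [mul_assoc]
    rw [r_7_0]
    exact mW3 K
  · show q K 4 * (q K 7) * q K 1 ∈ NW K
    rw [mul_assoc]
    rw [r_7_1, mul_zero]
    exact Submodule.zero_mem _
  · show q K 4 * (q K 7) * q K 2 ∈ NW K
    rw [mul_assoc]
    rw [r_7_2, mul_zero]
    exact Submodule.zero_mem _
  · show q K 4 * (q K 7) * q K 3 ∈ NW K
    rw [mul_assoc]
    rw [r_7_3, mul_zero]
    exact Submodule.zero_mem _
  · show q K 4 * (q K 7) * q K 4 ∈ NW K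
    rw [mul_assoc]
    rw [R5]
    exact mW4 K
  · show q K 4 * (q K 7) * q K 5 ∈ NW K
    rw [mul_assoc]
    rw [r_7_5, mul_zero]
    exact Submodule.zero_mem _
  · show q K 4 * (q K 7) * q K 6 ∈ NW K
    rw [mul_assoc]
    rw [r_7_6, mul_zero]
    exact Submodule.zero_mem _
  · show q K 4 * (q K 7) * q K 7 ∈ NW K
    rw [mul_assoc]
    rw [r_7_7, mul_zero]
    exact Submodule.zero_mem _
  · show q K 4 * (q K 7) * q K 8 ∈ NW K
    rw [mul_assoc]
    rw [r_7_8, mul_zero]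
    exact Submodule.zero_mem _
  · show q K 4 * (q K 7) * q K 9 ∈ NW K
    rw [mul_assoc]
    rw [r_7_9, mul_zero]
    exact Submodule.zero_mem _
  · show q K 4 * (q K 5 * (q K 8)) * q K 0 ∈ NW K
    simp only [mul_assoc]
    rw [r_8_0, mul_zero, mul_zero]
    exact Submodule.zero_mem _
  · show q K 4 * (q K 5 * (q K 8)) * q K 1 ∈ NW K
    simp only [mul_assoc]
    rw [r_8_1]
    exact mW4 K
  · show q K 4 * (q K 5 * (q K 8)) * q K 2 ∈ NW K
    simp only [mul_assoc]
    rw [r_8_2, mul_zero, mul_zero]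
    exact Submodule.zero_mem _
  · show q K 4 * (q K 5 * (q K 8)) * q K 3 ∈ NW K
    simp only [mul_assoc]
    rw [r_8_3, mul_zero, mul_zero]
    exact Submodule.zero_mem _
  · show q K 4 * (q K 5 * (q K 8)) * q K 4 ∈ NW K
    simp only [mul_assoc]
    rw [r_8_4, mul_zero, mul_zero]
    exact Submodule.zero_mem _
  · show q K 4 * (q K 5 * (q K 8)) * q K 5 ∈ NW K
    simp only [mul_assoc]
    rw [R7, mul_zero]
    exact Submodule.zero_mem _
  · show q K 4 * (q K 5 * (q K 8)) * q K 6 ∈ NW K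
    simp only [mul_assoc]
    rw [r_8_6, mul_zero, mul_zero]
    exact Submodule.zero_mem _
  · show q K 4 * (q K 5 * (q K 8)) * q K 7 ∈ NW K
    simp only [mul_assoc]
    exact mW5 K
  · show q K 4 * (q K 5 * (q K 8)) * q K 8 ∈ NW K
    simp only [mul_assoc]
    rw [r_8_8, mul_zero, mul_zero]
    exact Submodule.zero_mem _
  · show q K 4 * (q K 5 * (q K 8)) * q K 9 ∈ NW K
    simp only [mul_assoc]
    rw [r_8_9, mul_zero, mul_zero]
    exact Submodule.zero_mem _
  · show q K 4 * (q K 5 * (q K 8 * (q K 7))) * q K 0 ∈ NW K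
    simp only [mul_assoc]
    rw [r_7_0]
    exact mW5 K
  · show q K 4 * (q K 5 * (q K 8 * (q K 7))) * q K 1 ∈ NW K
    simp only [mul_assoc]
    rw [r_7_1, mul_zero, mul_zero, mul_zero]
    exact Submodule.zero_mem _
  · show q K 4 * (q K 5 * (q K 8 * (q K 7))) * q K 2 ∈ NW K
    simp only [mul_assoc]
    rw [r_7_2, mul_zero, mul_zero, mul_zero]
    exact Submodule.zero_mem _
  · show q K 4 * (q K 5 * (q K 8 * (q K 7))) * q K 3 ∈ NW K
    simp only [mul_assoc]
    rw [r_7_3, mul_zero, mul_zero, mul_zero]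
    exact Submodule.zero_mem _
  · show q K 4 * (q K 5 * (q K 8 * (q K 7))) * q K 4 ∈ NW K
    simp only [mul_assoc]
    rw [L1]
    exact Submodule.zero_mem _
  · show q K 4 * (q K 5 * (q K 8 * (q K 7))) * q K 5 ∈ NW K
    simp only [mul_assoc]
    rw [r_7_5, mul_zero, mul_zero, mul_zero]
    exact Submodule.zero_mem _
  · show q K 4 * (q K 5 * (q K 8 * (q K 7))) * q K 6 ∈ NW K
    simp only [mul_assoc]
    rw [r_7_6, mul_zero, mul_zero, mul_zero]
    exact Submodule.zero_mem _
  · show q K 4 * (q K 5 * (q K 8 * (q K 7))) * q K 7 ∈ NW K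
    simp only [mul_assoc]
    rw [r_7_7, mul_zero, mul_zero, mul_zero]
    exact Submodule.zero_mem _
  · show q K 4 * (q K 5 * (q K 8 * (q K 7))) * q K 8 ∈ NW K
    simp only [mul_assoc]
    rw [r_7_8, mul_zero, mul_zero, mul_zero]
    exact Submodule.zero_mem _
  · show q K 4 * (q K 5 * (q K 8 * (q K 7))) * q K 9 ∈ NW K
    simp only [mul_assoc]
    rw [r_7_9, mul_zero, mul_zero, mul_zero]
    exact Submodule.zero_mem _

lemma stepU {K : Type} [Field K] : ∀ (k : Fin 9) (g : Fin 10), vU K k * q K g ∈ NU K := by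
  intro k g
  fin_cases k <;> fin_cases g
  · show q K 1 * q K 0 ∈ NU K
    rw [r_1_0]
    exact Submodule.zero_mem _
  · show q K 1 * q K 1 ∈ NU K
    rw [r_1_1]
    exact mU0 K
  · show q K 1 * q K 2 ∈ NU K
    rw [r_1_2]
    exact Submodule.zero_mem _
  · show q K 1 * q K 3 ∈ NU K
    rw [r_1_3]
    exact Submodule.zero_mem _
  · show q K 1 * q K 4 ∈ NU K
    rw [r_1_4]
    exact Submodule.zero_mem _
  · show q K 1 * q K 5 ∈ NU K
    rw [r_1_5]
    exact mU1 K
  · show q K 1 * q K 6 ∈ NU K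
    rw [r_1_6]
    exact Submodule.zero_mem _
  · show q K 1 * q K 7 ∈ NU K
    rw [r_1_7]
    exact mU2 K
  · show q K 1 * q K 8 ∈ NU K
    rw [r_1_8]
    exact Submodule.zero_mem _
  · show q K 1 * q K 9 ∈ NU K
    rw [r_1_9]
    exact Submodule.zero_mem _
  · show q K 5 * q K 0 ∈ NU K
    rw [r_5_0]
    exact Submodule.zero_mem _
  · show q K 5 * q K 1 ∈ NU K
    rw [r_5_1]
    exact Submodule.zero_mem _
  · show q K 5 * q K 2 ∈ NU K
    rw [r_5_2]
    exact mU1 K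
  · show q K 5 * q K 3 ∈ NU K
    rw [r_5_3]
    exact Submodule.zero_mem _
  · show q K 5 * q K 4 ∈ NU K
    rw [r_5_4]
    exact Submodule.zero_mem _
  · show q K 5 * q K 5 ∈ NU K
    rw [r_5_5]
    exact Submodule.zero_mem _
  · show q K 5 * q K 6 ∈ NU K
    exact mU3 K
  · show q K 5 * q K 7 ∈ NU K
    rw [r_5_7]
    exact Submodule.zero_mem _
  · show q K 5 * q K 8 ∈ NU K
    exact mU4 K
  · show q K 5 * q K 9 ∈ NU K
    rw [r_5_9]
    exact Submodule.zero_mem _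
  · show q K 7 * q K 0 ∈ NU K
    rw [r_7_0]
    exact mU2 K
  · show q K 7 * q K 1 ∈ NU K
    rw [r_7_1]
    exact Submodule.zero_mem _
  · show q K 7 * q K 2 ∈ NU K
    rw [r_7_2]
    exact Submodule.zero_mem _
  · show q K 7 * q K 3 ∈ NU K
    rw [r_7_3]
    exact Submodule.zero_mem _
  · show q K 7 * q K 4 ∈ NU K
    exact mU5 K
  · show q K 7 * q K 5 ∈ NU K
    rw [r_7_5]
    exact Submodule.zero_mem _
  · show q K 7 * q K 6 ∈ NU K
    rw [r_7_6]
    exact Submodule.zero_mem _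
  · show q K 7 * q K 7 ∈ NU K
    rw [r_7_7]
    exact Submodule.zero_mem _
  · show q K 7 * q K 8 ∈ NU K
    rw [r_7_8]
    exact Submodule.zero_mem _
  · show q K 7 * q K 9 ∈ NU K
    rw [r_7_9]
    exact Submodule.zero_mem _
  · show q K 5 * (q K 6) * q K 0 ∈ NU K
    rw [mul_assoc]
    rw [r_6_0, mul_zero]
    exact Submodule.zero_mem _
  · show q K 5 * (q K 6) * q K 1 ∈ NU K
    rw [mul_assoc]
    rw [r_6_1, mul_zero]
    exact Submodule.zero_mem _
  · show q K 5 * (q K 6) * q K 2 ∈ NU K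
    rw [mul_assoc]
    rw [r_6_2, mul_zero]
    exact Submodule.zero_mem _
  · show q K 5 * (q K 6) * q K 3 ∈ NU K
    rw [mul_assoc]
    rw [r_6_3]
    exact mU3 K
  · show q K 5 * (q K 6) * q K 4 ∈ NU K
    rw [mul_assoc]
    rw [r_6_4, mul_zero]
    exact Submodule.zero_mem _
  · show q K 5 * (q K 6) * q K 5 ∈ NU K
    rw [mul_assoc]
    rw [r_6_5, mul_zero]
    exact Submodule.zero_mem _
  · show q K 5 * (q K 6) * q K 6 ∈ NU K
    rw [mul_assoc]
    rw [r_6_6, mul_zero]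
    exact Submodule.zero_mem _
  · show q K 5 * (q K 6) * q K 7 ∈ NU K
    rw [mul_assoc]
    rw [r_6_7, mul_zero]
    exact Submodule.zero_mem _
  · show q K 5 * (q K 6) * q K 8 ∈ NU K
    rw [mul_assoc]
    rw [r_6_8, mul_zero]
    exact Submodule.zero_mem _
  · show q K 5 * (q K 6) * q K 9 ∈ NU K
    rw [mul_assoc]
    exact mU6 K
  · show q K 5 * (q K 8) * q K 0 ∈ NU K
    rw [mul_assoc]
    rw [r_8_0, mul_zero]
    exact Submodule.zero_mem _
  · show q K 5 * (q K 8) * q K 1 ∈ NU K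
    rw [mul_assoc]
    rw [r_8_1]
    exact mU4 K
  · show q K 5 * (q K 8) * q K 2 ∈ NU K
    rw [mul_assoc]
    rw [r_8_2, mul_zero]
    exact Submodule.zero_mem _
  · show q K 5 * (q K 8) * q K 3 ∈ NU K
    rw [mul_assoc]
    rw [r_8_3, mul_zero]
    exact Submodule.zero_mem _
  · show q K 5 * (q K 8) * q K 4 ∈ NU K
    rw [mul_assoc]
    rw [r_8_4, mul_zero]
    exact Submodule.zero_mem _
  · show q K 5 * (q K 8) * q K 5 ∈ NU K
    rw [mul_assoc]
    rw [R7]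
    exact Submodule.zero_mem _
  · show q K 5 * (q K 8) * q K 6 ∈ NU K
    rw [mul_assoc]
    rw [r_8_6, mul_zero]
    exact Submodule.zero_mem _
  · show q K 5 * (q K 8) * q K 7 ∈ NU K
    rw [mul_assoc]
    exact mU7 K
  · show q K 5 * (q K 8) * q K 8 ∈ NU K
    rw [mul_assoc]
    rw [r_8_8, mul_zero]
    exact Submodule.zero_mem _
  · show q K 5 * (q K 8) * q K 9 ∈ NU K
    rw [mul_assoc]
    rw [r_8_9, mul_zero]
    exact Submodule.zero_mem _
  · show q K 7 * (q K 4) * q K 0 ∈ NU K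
    rw [mul_assoc]
    rw [r_4_0, mul_zero]
    exact Submodule.zero_mem _
  · show q K 7 * (q K 4) * q K 1 ∈ NU K
    rw [mul_assoc]
    rw [r_4_1]
    exact mU5 K
  · show q K 7 * (q K 4) * q K 2 ∈ NU K
    rw [mul_assoc]
    rw [r_4_2, mul_zero]
    exact Submodule.zero_mem _
  · show q K 7 * (q K 4) * q K 3 ∈ NU K
    rw [mul_assoc]
    rw [r_4_3, mul_zero]
    exact Submodule.zero_mem _
  · show q K 7 * (q K 4) * q K 4 ∈ NU K
    rw [mul_assoc]
    rw [r_4_4, mul_zero]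
    exact Submodule.zero_mem _
  · show q K 7 * (q K 4) * q K 5 ∈ NU K
    rw [mul_assoc]
    rw [R3]
    exact mU6 K
  · show q K 7 * (q K 4) * q K 6 ∈ NU K
    rw [mul_assoc]
    rw [r_4_6, mul_zero]
    exact Submodule.zero_mem _
  · show q K 7 * (q K 4) * q K 7 ∈ NU K
    rw [mul_assoc]
    rw [R6]
    exact mU7 K
  · show q K 7 * (q K 4) * q K 8 ∈ NU K
    rw [mul_assoc]
    rw [r_4_8, mul_zero]
    exact Submodule.zero_mem _
  · show q K 7 * (q K 4) * q K 9 ∈ NU K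
    rw [mul_assoc]
    rw [r_4_9, mul_zero]
    exact Submodule.zero_mem _
  · show q K 5 * (q K 6 * (q K 9)) * q K 0 ∈ NU K
    simp only [mul_assoc]
    rw [r_9_0, mul_zero, mul_zero]
    exact Submodule.zero_mem _
  · show q K 5 * (q K 6 * (q K 9)) * q K 1 ∈ NU K
    simp only [mul_assoc]
    rw [r_9_1, mul_zero, mul_zero]
    exact Submodule.zero_mem _
  · show q K 5 * (q K 6 * (q K 9)) * q K 2 ∈ NU K
    simp only [mul_assoc]
    rw [r_9_2]
    exact mU6 K
  · show q K 5 * (q K 6 * (q K 9)) * q K 3 ∈ NU K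
    simp only [mul_assoc]
    rw [r_9_3, mul_zero, mul_zero]
    exact Submodule.zero_mem _
  · show q K 5 * (q K 6 * (q K 9)) * q K 4 ∈ NU K
    simp only [mul_assoc]
    rw [r_9_4, mul_zero, mul_zero]
    exact Submodule.zero_mem _
  · show q K 5 * (q K 6 * (q K 9)) * q K 5 ∈ NU K
    simp only [mul_assoc]
    rw [r_9_5, mul_zero, mul_zero]
    exact Submodule.zero_mem _
  · show q K 5 * (q K 6 * (q K 9)) * q K 6 ∈ NU K
    simp only [mul_assoc]
    rw [R9, xR7]
    exact Submodule.zero_mem _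
  · show q K 5 * (q K 6 * (q K 9)) * q K 7 ∈ NU K
    simp only [mul_assoc]
    rw [r_9_7, mul_zero, mul_zero]
    exact Submodule.zero_mem _
  · show q K 5 * (q K 6 * (q K 9)) * q K 8 ∈ NU K
    simp only [mul_assoc]
    exact mU8 K
  · show q K 5 * (q K 6 * (q K 9)) * q K 9 ∈ NU K
    simp only [mul_assoc]
    rw [r_9_9, mul_zero, mul_zero]
    exact Submodule.zero_mem _
  · show q K 5 * (q K 8 * (q K 7)) * q K 0 ∈ NU K
    simp only [mul_assoc]
    rw [r_7_0]
    exact mU7 K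
  · show q K 5 * (q K 8 * (q K 7)) * q K 1 ∈ NU K
    simp only [mul_assoc]
    rw [r_7_1, mul_zero, mul_zero]
    exact Submodule.zero_mem _
  · show q K 5 * (q K 8 * (q K 7)) * q K 2 ∈ NU K
    simp only [mul_assoc]
    rw [r_7_2, mul_zero, mul_zero]
    exact Submodule.zero_mem _
  · show q K 5 * (q K 8 * (q K 7)) * q K 3 ∈ NU K
    simp only [mul_assoc]
    rw [r_7_3, mul_zero, mul_zero]
    exact Submodule.zero_mem _
  · show q K 5 * (q K 8 * (q K 7)) * q K 4 ∈ NU K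
    simp only [mul_assoc]
    rw [R4]
    exact mU8 K
  · show q K 5 * (q K 8 * (q K 7)) * q K 5 ∈ NU K
    simp only [mul_assoc]
    rw [r_7_5, mul_zero, mul_zero]
    exact Submodule.zero_mem _
  · show q K 5 * (q K 8 * (q K 7)) * q K 6 ∈ NU K
    simp only [mul_assoc]
    rw [r_7_6, mul_zero, mul_zero]
    exact Submodule.zero_mem _
  · show q K 5 * (q K 8 * (q K 7)) * q K 7 ∈ NU K
    simp only [mul_assoc]
    rw [r_7_7, mul_zero, mul_zero]
    exact Submodule.zero_mem _
  · show q K 5 * (q K 8 * (q K 7)) * q K 8 ∈ NU K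
    simp only [mul_assoc]
    rw [r_7_8, mul_zero, mul_zero]
    exact Submodule.zero_mem _
  · show q K 5 * (q K 8 * (q K 7)) * q K 9 ∈ NU K
    simp only [mul_assoc]
    rw [r_7_9, mul_zero, mul_zero]
    exact Submodule.zero_mem _
  · show q K 5 * (q K 6 * (q K 9 * (q K 8))) * q K 0 ∈ NU K
    simp only [mul_assoc]
    rw [r_8_0, mul_zero, mul_zero, mul_zero]
    exact Submodule.zero_mem _
  · show q K 5 * (q K 6 * (q K 9 * (q K 8))) * q K 1 ∈ NU K
    simp only [mul_assoc]
    rw [r_8_1]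
    exact mU8 K
  · show q K 5 * (q K 6 * (q K 9 * (q K 8))) * q K 2 ∈ NU K
    simp only [mul_assoc]
    rw [r_8_2, mul_zero, mul_zero, mul_zero]
    exact Submodule.zero_mem _
  · show q K 5 * (q K 6 * (q K 9 * (q K 8))) * q K 3 ∈ NU K
    simp only [mul_assoc]
    rw [r_8_3, mul_zero, mul_zero, mul_zero]
    exact Submodule.zero_mem _
  · show q K 5 * (q K 6 * (q K 9 * (q K 8))) * q K 4 ∈ NU K
    simp only [mul_assoc]
    rw [r_8_4, mul_zero, mul_zero, mul_zero]
    exact Submodule.zero_mem _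
  · show q K 5 * (q K 6 * (q K 9 * (q K 8))) * q K 5 ∈ NU K
    simp only [mul_assoc]
    rw [L2]
    exact Submodule.zero_mem _
  · show q K 5 * (q K 6 * (q K 9 * (q K 8))) * q K 6 ∈ NU K
    simp only [mul_assoc]
    rw [r_8_6, mul_zero, mul_zero, mul_zero]
    exact Submodule.zero_mem _
  · show q K 5 * (q K 6 * (q K 9 * (q K 8))) * q K 7 ∈ NU K
    simp only [mul_assoc]
    rw [L3]
    exact Submodule.zero_mem _
  · show q K 5 * (q K 6 * (q K 9 * (q K 8))) * q K 8 ∈ NU K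
    simp only [mul_assoc]
    rw [r_8_8, mul_zero, mul_zero, mul_zero]
    exact Submodule.zero_mem _
  · show q K 5 * (q K 6 * (q K 9 * (q K 8))) * q K 9 ∈ NU K
    simp only [mul_assoc]
    rw [r_8_9, mul_zero, mul_zero, mul_zero]
    exact Submodule.zero_mem _

lemma right_mul_closed {K : Type} [Field K] {N : Submodule K (Q4Alg K)}
    (hN : ∀ x ∈ N, ∀ g : Fin 10, x * q K g ∈ N) :
    ∀ (y : Q4Alg K), ∀ x ∈ N, x * y ∈ N := by
  intro y
  obtain ⟨z, rfl⟩ := RingQuot.mkAlgHom_surjective K (q4Rel K) y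
  refine FreeAlgebra.induction K Q4Gen
    (motive := fun z => ∀ x ∈ N, x * RingQuot.mkAlgHom K (q4Rel K) z ∈ N) ?_ ?_ ?_ ?_ z
  · intro r x hx
    rw [AlgHom.commutes, Algebra.algebraMap_eq_smul_one, mul_smul_comm, mul_one]
    exact N.smul_mem r hx
  · intro g x hx
    exact hN x hx g
  · intro a b ha hb x hx
    rw [map_mul, ← mul_assoc]
    exact hb _ (ha x hx)
  · intro a b ha hb x hx
    rw [map_add, mul_add]
    exact N.add_mem (ha x hx) (hb x hx)

lemma hNW {K : Type} [Field K] : ∀ x ∈ NW K, ∀ g : Fin 10, x * q K g ∈ NW K := by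
  intro x hx g
  induction hx using Submodule.span_induction with
  | mem x h =>
      obtain ⟨k, rfl⟩ := h
      exact stepW k g
  | zero => rw [zero_mul]; exact Submodule.zero_mem _
  | add a b _ _ ha hb => rw [add_mul]; exact Submodule.add_mem _ ha hb
  | smul c a _ ha => rw [smul_mul_assoc]; exact Submodule.smul_mem _ c ha

lemma hNU {K : Type} [Field K] : ∀ x ∈ NU K, ∀ g : Fin 10, x * q K g ∈ NU K := by
  intro x hx g
  induction hx using Submodule.span_induction with
  | mem x h =>
      obtain ⟨k, rfl⟩ := h
      exact stepU k g
  | zero => rw [zero_mul]; exact Submodule.zero_mem _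
  | add a b _ _ ha hb => rw [add_mul]; exact Submodule.add_mem _ ha hb
  | smul c a _ ha => rw [smul_mul_assoc]; exact Submodule.smul_mem _ c ha

def tW : Fin 6 → Fin 30 := ![0, 4, 10, 11, 20, 26]
def tU : Fin 9 → Fin 30 := ![1, 5, 6, 12, 13, 14, 21, 22, 27]
lemma keyW {K : Type} [Field K] : ∀ k : Fin 6, (rowL K 0 ∘ₗ (Phi K).toLinearMap) (vW K k) = Pi.single (tW k) (1 : K) := by
  intro k
  fin_cases k
  · show rowL K 0 (Phi K (q K 0)) = Pi.single (0 : Fin 30) (1 : K)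
    simp only [map_mul, Phi_q, PM_mul]
    exact row_single _ _ _ (by decide)
  · show rowL K 0 (Phi K (q K 4)) = Pi.single (4 : Fin 30) (1 : K)
    simp only [map_mul, Phi_q, PM_mul]
    exact row_single _ _ _ (by decide)
  · show rowL K 0 (Phi K (q K 4 * (q K 5))) = Pi.single (10 : Fin 30) (1 : K)
    simp only [map_mul, Phi_q, PM_mul]
    exact row_single _ _ _ (by decide)
  · show rowL K 0 (Phi K (q K 4 * (q K 7))) = Pi.single (11 : Fin 30) (1 : K)
    simp only [map_mul, Phi_q, PM_mul]
    exact row_single _ _ _ (by decide)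
  · show rowL K 0 (Phi K (q K 4 * (q K 5 * (q K 8)))) = Pi.single (20 : Fin 30) (1 : K)
    simp only [map_mul, Phi_q, PM_mul]
    exact row_single _ _ _ (by decide)
  · show rowL K 0 (Phi K (q K 4 * (q K 5 * (q K 8 * (q K 7))))) = Pi.single (26 : Fin 30) (1 : K)
    simp only [map_mul, Phi_q, PM_mul]
    exact row_single _ _ _ (by decide)

lemma keyU {K : Type} [Field K] : ∀ k : Fin 9, (rowL K 1 ∘ₗ (Phi K).toLinearMap) (vU K k) = Pi.single (tU k) (1 : K) := by
  intro k
  fin_cases k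
  · show rowL K 1 (Phi K (q K 1)) = Pi.single (1 : Fin 30) (1 : K)
    simp only [map_mul, Phi_q, PM_mul]
    exact row_single _ _ _ (by decide)
  · show rowL K 1 (Phi K (q K 5)) = Pi.single (5 : Fin 30) (1 : K)
    simp only [map_mul, Phi_q, PM_mul]
    exact row_single _ _ _ (by decide)
  · show rowL K 1 (Phi K (q K 7)) = Pi.single (6 : Fin 30) (1 : K)
    simp only [map_mul, Phi_q, PM_mul]
    exact row_single _ _ _ (by decide)
  · show rowL K 1 (Phi K (q K 5 * (q K 6))) = Pi.single (12 : Fin 30) (1 : K)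
    simp only [map_mul, Phi_q, PM_mul]
    exact row_single _ _ _ (by decide)
  · show rowL K 1 (Phi K (q K 5 * (q K 8))) = Pi.single (13 : Fin 30) (1 : K)
    simp only [map_mul, Phi_q, PM_mul]
    exact row_single _ _ _ (by decide)
  · show rowL K 1 (Phi K (q K 7 * (q K 4))) = Pi.single (14 : Fin 30) (1 : K)
    simp only [map_mul, Phi_q, PM_mul]
    exact row_single _ _ _ (by decide)
  · show rowL K 1 (Phi K (q K 5 * (q K 6 * (q K 9)))) = Pi.single (21 : Fin 30) (1 : K)
    simp only [map_mul, Phi_q, PM_mul]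
    exact row_single _ _ _ (by decide)
  · show rowL K 1 (Phi K (q K 5 * (q K 8 * (q K 7)))) = Pi.single (22 : Fin 30) (1 : K)
    simp only [map_mul, Phi_q, PM_mul]
    exact row_single _ _ _ (by decide)
  · show rowL K 1 (Phi K (q K 5 * (q K 6 * (q K 9 * (q K 8))))) = Pi.single (27 : Fin 30) (1 : K)
    simp only [map_mul, Phi_q, PM_mul]
    exact row_single _ _ _ (by decide)
lemma q4_dim1 (K : Type) [Field K] :
    Module.finrank K
      (Submodule.span K {x : Q4Alg K | ∃ y, x = q K 0 * y}) = 6 := by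
  have hspan : Submodule.span K {x : Q4Alg K | ∃ y, x = q K 0 * y} = NW K := by
    apply le_antisymm
    · rw [Submodule.span_le]
      rintro x ⟨y, rfl⟩
      exact right_mul_closed hNW y _ (mW0 K)
    · rw [NW, Submodule.span_le]
      rintro x ⟨k, rfl⟩
      apply Submodule.subset_span
      show ∃ y, vW K k = q K 0 * y
      fin_cases k
      exacts [⟨q K 0, (r_0_0).symm⟩, ⟨q K 4, (r_0_4).symm⟩, ⟨q K 4 * (q K 5), (xr_0_4 _).symm⟩, ⟨q K 4 * (q K 7), (xr_0_4 _).symm⟩, ⟨q K 4 * (q K 5 * (q K 8)), (xr_0_4 _).symm⟩, ⟨q K 4 * (q K 5 * (q K 8 * (q K 7))), (xr_0_4 _).symm⟩]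
  have liU : LinearIndependent K (⇑(rowL K 0 ∘ₗ (Phi K).toLinearMap) ∘ vW K) := by
    have he : ⇑(rowL K 0 ∘ₗ (Phi K).toLinearMap) ∘ vW K
        = fun k => Pi.single (tW k) (1:K) := funext keyW
    rw [he]
    exact single_indep tW (by decide)
  have li : LinearIndependent K (vW K) :=
    LinearIndependent.of_comp _ liU
  rw [hspan, NW]
  simpa using finrank_span_eq_card li

lemma q4_dim2 (K : Type) [Field K] :
    Module.finrank K
      (Submodule.span K {x : Q4Alg K | ∃ y, x = q K 1 * y}) = 9 := by
  have hspan : Submodule.span K {x : Q4Alg K | ∃ y, x = q K 1 * y} = NU K := by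
    apply le_antisymm
    · rw [Submodule.span_le]
      rintro x ⟨y, rfl⟩
      exact right_mul_closed hNU y _ (mU0 K)
    · rw [NU, Submodule.span_le]
      rintro x ⟨k, rfl⟩
      apply Submodule.subset_span
      show ∃ y, vU K k = q K 1 * y
      fin_cases k
      exacts [⟨q K 1, (r_1_1).symm⟩, ⟨q K 5, (r_1_5).symm⟩, ⟨q K 7, (r_1_7).symm⟩, ⟨q K 5 * (q K 6), (xr_1_5 _).symm⟩, ⟨q K 5 * (q K 8), (xr_1_5 _).symm⟩, ⟨q K 7 * (q K 4), (xr_1_7 _).symm⟩, ⟨q K 5 * (q K 6 * (q K 9)), (xr_1_5 _).symm⟩, ⟨q K 5 * (q K 8 * (q K 7)), (xr_1_5 _).symm⟩, ⟨q K 5 * (q K 6 * (q K 9 * (q K 8))), (xr_1_5 _).symm⟩]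
  have liU : LinearIndependent K (⇑(rowL K 1 ∘ₗ (Phi K).toLinearMap) ∘ vU K) := by
    have he : ⇑(rowL K 1 ∘ₗ (Phi K).toLinearMap) ∘ vU K
        = fun k => Pi.single (tU k) (1:K) := funext keyU
    rw [he]
    exact single_indep tU (by decide)
  have li : LinearIndependent K (vU K) :=
    LinearIndependent.of_comp _ liU
  rw [hspan, NU]
  simpa using finrank_span_eq_card li


/-- For `K` a field of odd characteristic, in the bounded quiver algebra `KQ/I` above,
the indecomposable projective module `e₁·(KQ/I)` has dimension `6` over `K`, and
`e₂·(KQ/I)` has dimension `9`. -/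
theorem q4_projective_dimensions (p : ℕ) [CharP K p] (hp : Odd p) :
    Module.finrank K
        (Submodule.span K {x : Q4Alg K | ∃ y, x = q K 0 * y}) = 6 ∧
    Module.finrank K
        (Submodule.span K {x : Q4Alg K | ∃ y, x = q K 1 * y}) = 9 := by
  exact ⟨q4_dim1 K, q4_dim2 K⟩

end
end
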